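/- arXiv:2502.16397 — 6 statements merged into one kernel-verified Lean document; each statement's English description precedes it below -/
import Mathlib

section
/- Let I ⊂ ℝ be a finite interval, k ≥ 1 an integer, and f ∈ C^k(I, ℝ) with inf_{x∈I} |f^{(k)}(x)| ≥ A > 0. Then for all ζ > 0, the Lebesgue measure of {x ∈ I : |f(x)| ≤ ζ} is at most C_k (ζ/A)^{1/k}, where C_k = k(k+1)[(k+1)!]^{1/k}. -/
open MeasureTheory Polynomial Set Finset


lemma rolleChain (a b : ℝ) :
    ∀ (n : ℕ) (g : ℕ → ℝ → ℝ),
    (∀ m ≤ n, ContinuousOn (g m) (Set.Icc a b)) →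
    (∀ m < n, ∀ x ∈ Set.Ioo a b, HasDerivAt (g m) (g (m+1) x) x) →
    ∀ (e : Fin (n+1) → ℝ), StrictMono e → (∀ i, e i ∈ Set.Icc a b) →
    (∀ i, g 0 (e i) = 0) →
    ∃ ξ ∈ Set.Icc a b, g n ξ = 0 := by
  intro n
  induction n with
  | zero =>
    intro g _ _ e _ hmem hz
    exact ⟨e 0, hmem 0, hz 0⟩
  | succ n ih =>
    intro g hc hd e hmono hmem hz
    have key : ∀ i : Fin (n+1), ∃ c ∈ Set.Ioo (e i.castSucc) (e i.succ), g 1 c = 0 := by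
      intro i
      have hlt : e i.castSucc < e i.succ := hmono (show i.castSucc < i.succ from Fin.castSucc_lt_succ)
      have hsub : Set.Icc (e i.castSucc) (e i.succ) ⊆ Set.Icc a b :=
        Set.Icc_subset_Icc (hmem i.castSucc).1 (hmem i.succ).2
      have hosub : Set.Ioo (e i.castSucc) (e i.succ) ⊆ Set.Ioo a b :=
        Set.Ioo_subset_Ioo (hmem i.castSucc).1 (hmem i.succ).2
      exact exists_hasDerivAt_eq_zero hlt ((hc 0 (Nat.zero_le _)).mono hsub)
        ((hz i.castSucc).trans (hz i.succ).symm)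
        (fun x hx => hd 0 (Nat.succ_pos n) x (hosub hx))
    choose c hcmem hczero using key
    have hcmono : StrictMono c := by
      rw [Fin.strictMono_iff_lt_succ]
      intro i
      calc c i.castSucc < e i.castSucc.succ := (hcmem i.castSucc).2
        _ = e i.succ.castSucc := by rw [Fin.succ_castSucc]
        _ < c i.succ := (hcmem i.succ).1
    have hcmem' : ∀ i, c i ∈ Set.Icc a b := fun i =>
      ⟨(hmem i.castSucc).1.trans (hcmem i).1.le, (hcmem i).2.le.trans (hmem i.succ).2⟩
    exact ih (fun m => g (m+1)) (fun m hm => hc (m+1) (by omega))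
      (fun m hm x hx => hd (m+1) (by omega) x hx) c hcmono hcmem' hczero


lemma iterDerivConst (k : ℕ) (p : ℝ[X]) (h : p.natDegree ≤ k) :
    derivative^[k] p = C ((k.factorial : ℝ) * p.coeff k) := by
  have hdeg : (derivative^[k] p).natDegree = 0 := by
    have := p.natDegree_iterate_derivative k
    omega
  have := Polynomial.eq_C_of_natDegree_le_zero hdeg.le
  rw [this, Polynomial.coeff_iterate_derivative]
  simp [Nat.descFactorial_self, nsmul_eq_mul, mul_comm]

lemma coeff_basis_abs_le (k : ℕ) (e : Fin (k+1) → ℝ) (hinj : Function.Injective e)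
    (d : ℝ) (hd : 0 < d) (hsep : ∀ i j, i ≠ j → d ≤ |e i - e j|) (i : Fin (k+1)) :
    |(Lagrange.basis Finset.univ e i).coeff k| ≤ d⁻¹ ^ k := by
  have hcard : (Finset.univ.erase i).card = k := by
    rw [Finset.card_erase_of_mem (Finset.mem_univ i), Finset.card_univ, Fintype.card_fin]
    omega
  have hnd : (Lagrange.basis Finset.univ e i).natDegree = k := by
    rw [Lagrange.natDegree_basis (hinj.injOn) (Finset.mem_univ i), Finset.card_univ,
      Fintype.card_fin]
    omega
  have h2 : (Lagrange.basis Finset.univ e i).coeff k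
      = (Lagrange.basis Finset.univ e i).leadingCoeff := by
    rw [Polynomial.leadingCoeff, hnd]
  have hlc : (Lagrange.basis Finset.univ e i).leadingCoeff
      = ∏ j ∈ Finset.univ.erase i, (e i - e j)⁻¹ := by
    rw [Lagrange.basis, Polynomial.leadingCoeff_prod]
    refine Finset.prod_congr rfl fun j hj => ?_
    rw [Lagrange.basisDivisor, Polynomial.leadingCoeff_mul, Polynomial.leadingCoeff_C,
      Polynomial.leadingCoeff_X_sub_C, mul_one]
  rw [h2, hlc, Finset.abs_prod]
  calc ∏ j ∈ Finset.univ.erase i, |(e i - e j)⁻¹|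
      ≤ ∏ _j ∈ Finset.univ.erase i, d⁻¹ := by
        refine Finset.prod_le_prod (fun j _ => abs_nonneg _) (fun j hj => ?_)
        rw [abs_inv]
        exact inv_anti₀ hd (hsep i j ((Finset.mem_erase.mp hj).1.symm))
    _ = d⁻¹ ^ k := by rw [Finset.prod_const, hcard]

lemma coeff_interpolate_abs_le (k : ℕ) (e : Fin (k+1) → ℝ) (r : Fin (k+1) → ℝ)
    (hinj : Function.Injective e) (d : ℝ) (hd : 0 < d)
    (hsep : ∀ i j, i ≠ j → d ≤ |e i - e j|) (ζ : ℝ) (hr : ∀ i, |r i| ≤ ζ) :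
    |(Lagrange.interpolate Finset.univ e r).coeff k| ≤ (k+1) * ζ * d⁻¹ ^ k := by
  rw [Lagrange.interpolate_apply, Polynomial.finset_sum_coeff]
  calc |∑ i, (Polynomial.C (r i) * Lagrange.basis Finset.univ e i).coeff k|
      ≤ ∑ i : Fin (k+1), |(Polynomial.C (r i) * Lagrange.basis Finset.univ e i).coeff k| :=
        Finset.abs_sum_le_sum_abs _ _
    _ ≤ ∑ _i : Fin (k+1), ζ * d⁻¹ ^ k := by
        refine Finset.sum_le_sum fun i _ => ?_
        rw [Polynomial.coeff_C_mul, abs_mul]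
        exact mul_le_mul (hr i) (coeff_basis_abs_le k e hinj d hd hsep i) (abs_nonneg _)
          ((abs_nonneg _).trans (hr i))
    _ = (k+1) * ζ * d⁻¹ ^ k := by
        rw [Finset.sum_const, Finset.card_univ, Fintype.card_fin, nsmul_eq_mul]
        push_cast; ring


lemma selection (E : Set ℝ) (a b : ℝ) (hE : IsClosed E) (hEsub : E ⊆ Set.Icc a b)
    (k : ℕ) (hμ : 0 < (volume E).toReal) :
    ∃ e : Fin (k+1) → ℝ, StrictMono e ∧ (∀ i, e i ∈ E) ∧
      ∀ i j, i ≠ j → (volume E).toReal / (k+1) ≤ |e i - e j| := by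
  set μ := (volume E).toReal with hμdef
  have hfin : volume E ≠ ⊤ := by
    refine ((measure_mono hEsub).trans_lt ?_).ne
    rw [Real.volume_Icc]; exact ENNReal.ofReal_lt_top
  have hfin' : ∀ t, volume (E ∩ Set.Iic t) ≠ ⊤ := fun t =>
    ((measure_mono Set.inter_subset_left).trans_lt hfin.lt_top).ne
  set F : ℝ → ℝ := fun t => (volume (E ∩ Set.Iic t)).toReal with hFdef
  have Fmono : Monotone F := fun s t hst =>
    ENNReal.toReal_mono (hfin' t)
      (measure_mono (Set.inter_subset_inter_right _ (Set.Iic_subset_Iic.mpr hst)))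
  have Flip : ∀ s t : ℝ, s ≤ t → F t ≤ F s + (t - s) := by
    intro s t hst
    have hsub : E ∩ Set.Iic t ⊆ (E ∩ Set.Iic s) ∪ Set.Ioc s t := by
      rintro x ⟨hxE, hxt⟩
      by_cases hxs : x ≤ s
      · exact Or.inl ⟨hxE, hxs⟩
      · exact Or.inr ⟨not_le.mp hxs, hxt⟩
    have h1 : volume (E ∩ Set.Iic t) ≤ volume (E ∩ Set.Iic s) + ENNReal.ofReal (t - s) := by
      refine (measure_mono hsub).trans ((measure_union_le _ _).trans ?_)
      rw [Real.volume_Ioc]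
    calc F t ≤ (volume (E ∩ Set.Iic s) + ENNReal.ofReal (t - s)).toReal :=
          ENNReal.toReal_mono (ENNReal.add_ne_top.mpr ⟨hfin' s, ENNReal.ofReal_ne_top⟩) h1
      _ = F s + (t - s) := by
          rw [ENNReal.toReal_add (hfin' s) ENNReal.ofReal_ne_top,
            ENNReal.toReal_ofReal (sub_nonneg.mpr hst)]
  have Fb : F b = μ := by
    have : E ∩ Set.Iic b = E := Set.inter_eq_left.mpr (fun x hx => (hEsub hx).2)
    rw [hFdef]; simp only [this]; rfl
  have Flt : ∀ t, t < a → F t = 0 := by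
    intro t ht
    have : E ∩ Set.Iic t = ∅ := by
      refine Set.eq_empty_of_forall_notMem ?_
      rintro x ⟨hxE, hxt⟩
      exact absurd ((hEsub hxE).1.trans hxt) (not_le.mpr ht)
    rw [hFdef]; simp only [this, measure_empty, ENNReal.toReal_zero]
  set c : Fin (k+1) → ℝ := fun i => ((i : ℕ) + 1) * μ / (k + 1) with hcdef
  have hkpos : (0:ℝ) < (k:ℝ) + 1 := by positivity
  have hc_pos : ∀ i, 0 < c i := fun i => by
    apply div_pos (mul_pos (by positivity) hμ) hkpos
  have hc_le : ∀ i, c i ≤ μ := by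
    intro i
    rw [hcdef, div_le_iff₀ hkpos]
    have : ((i : ℕ) : ℝ) + 1 ≤ (k : ℝ) + 1 := by
      have := i.isLt; exact_mod_cast Nat.succ_le_succ (Nat.lt_succ_iff.mp this)
    nlinarith [hμ]
  set T : Fin (k+1) → Set ℝ := fun i => {t | c i ≤ F t} with hTdef
  have hbT : ∀ i, b ∈ T i := fun i => by
    show c i ≤ F b; rw [Fb]; exact hc_le i
  have hlb : ∀ i, ∀ t ∈ T i, a ≤ t := by
    intro i t ht
    by_contra h
    have h0 : F t = 0 := Flt t (not_le.mp h)
    have : c i ≤ F t := ht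
    rw [h0] at this
    exact absurd this (not_le.mpr (hc_pos i))
  have bdd : ∀ i, BddBelow (T i) := fun i => ⟨a, hlb i⟩
  set e : Fin (k+1) → ℝ := fun i => sInf (T i) with hedef
  have hFe_ge : ∀ i, c i ≤ F (e i) := by
    intro i
    refine le_of_forall_pos_le_add ?_
    intro ε hε
    obtain ⟨t, htT, hlt⟩ := exists_lt_of_csInf_lt ⟨b, hbT i⟩
      (lt_add_of_pos_right (sInf (T i)) hε)
    calc c i ≤ F t := htT
      _ ≤ F (e i + ε) := Fmono hlt.le
      _ ≤ F (e i) + ε := by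
          have := Flip (e i) (e i + ε) (by linarith)
          linarith
  have hFe_le : ∀ i, F (e i) ≤ c i := by
    intro i
    refine le_of_forall_pos_le_add ?_
    intro ε hε
    have hnot : e i - ε ∉ T i := by
      intro h
      have h5 : e i ≤ e i - ε := csInf_le (bdd i) h
      linarith
    have hlt : F (e i - ε) < c i := not_le.mp hnot
    have := Flip (e i - ε) (e i) (by linarith)
    linarith
  have heE : ∀ i, e i ∈ E := by
    intro i
    by_contra h
    obtain ⟨δ, hδ, hball⟩ := Metric.isOpen_iff.mp hE.isOpen_compl (e i) h
    rw [Real.ball_eq_Ioo] at hball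
    have hEq : E ∩ Set.Iic (e i + δ/2) = E ∩ Set.Iic (e i - δ/2) := by
      ext x
      constructor
      · rintro ⟨hxE, hx⟩
        refine ⟨hxE, ?_⟩
        rw [Set.mem_Iic] at hx ⊢
        by_contra hx2
        push_neg at hx2
        exact hball ⟨by linarith, by linarith⟩ hxE
      · rintro ⟨hxE, hx⟩
        rw [Set.mem_Iic] at hx
        exact ⟨hxE, Set.mem_Iic.mpr (by linarith)⟩
    have h1 : F (e i + δ/2) = F (e i - δ/2) := by
      rw [hFdef]; simp only [hEq]
    have h2 : c i ≤ F (e i + δ/2) := (hFe_ge i).trans (Fmono (by linarith))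
    have h3 : F (e i - δ/2) < c i := by
      refine not_le.mp ?_
      intro hmem
      have h5 : e i ≤ e i - δ/2 := csInf_le (bdd i) hmem
      linarith
    linarith
  have hemono : ∀ i j : Fin (k+1), i ≤ j → e i ≤ e j := by
    intro i j hij
    refine csInf_le_csInf (bdd i) ⟨b, hbT j⟩ ?_
    intro t ht
    refine le_trans ?_ (show c j ≤ F t from ht)
    rw [hcdef]
    have : ((i : ℕ) : ℝ) ≤ ((j : ℕ) : ℝ) := by exact_mod_cast hij
    have h4 : ((i : ℕ) + 1 : ℝ) * μ ≤ ((j : ℕ) + 1) * μ := by nlinarith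
    exact div_le_div_of_nonneg_right h4 hkpos.le
  have hsep : ∀ i j : Fin (k+1), i < j → μ / (k+1) ≤ e j - e i := by
    intro i j hij
    have h1 : F (e j) ≤ F (e i) + (e j - e i) := Flip _ _ (hemono i j hij.le)
    have h2 : c j - c i ≤ e j - e i := by
      have := hFe_ge j
      have := hFe_le i
      linarith
    refine le_trans ?_ h2
    rw [hcdef]
    have hij' : ((i : ℕ) : ℝ) + 1 ≤ ((j : ℕ) : ℝ) := by
      have : (i : ℕ) < (j : ℕ) := hij
      exact_mod_cast this
    rw [div_sub_div_same, div_le_div_iff₀ hkpos hkpos]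
    have h5 : (0:ℝ) ≤ ((j:ℕ):ℝ) - ((i:ℕ):ℝ) - 1 := by linarith
    nlinarith [mul_nonneg (mul_nonneg h5 hμ.le) hkpos.le]
  have hd : 0 < μ / (k+1) := div_pos hμ hkpos
  refine ⟨e, ?_, heE, ?_⟩
  · intro i j hij
    have := hsep i j hij
    linarith
  · intro i j hij
    rcases lt_or_gt_of_ne hij with h | h
    · rw [abs_sub_comm, abs_of_nonneg (by linarith [hsep i j h])]
      exact hsep i j h
    · rw [abs_of_nonneg (by linarith [hsep j i h])]
      exact hsep j i h


/-- Kleinbock–Margulis type lemma: if the `k`-th derivative of `f` is bounded below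
in absolute value by `A > 0` on a finite interval, then the sublevel set
`{x ∈ I : |f x| ≤ ζ}` has measure at most `C_k (ζ/A)^{1/k}` with
`C_k = k(k+1)[(k+1)!]^{1/k}`. -/
theorem stmt0 (k : ℕ) (hk : 1 ≤ k) (a b : ℝ) (f : ℝ → ℝ) (A ζ : ℝ)
    (hA : 0 < A) (hζ : 0 < ζ)
    (hf : ContDiffOn ℝ k f (Set.Icc a b))
    (hder : ∀ x ∈ Set.Icc a b, A ≤ |iteratedDerivWithin k f (Set.Icc a b) x|) :
    volume {x ∈ Set.Icc a b | |f x| ≤ ζ} ≤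
      ENNReal.ofReal (((k : ℝ) * (k + 1) * ((Nat.factorial (k + 1) : ℝ)) ^ ((1 : ℝ) / k)) *
        (ζ / A) ^ ((1 : ℝ) / k)) := by
  set E := {x ∈ Set.Icc a b | |f x| ≤ ζ} with hEdef
  have hEsub : E ⊆ Set.Icc a b := fun x hx => hx.1
  have hEc : IsClosed E := by
    have hEq : E = Set.Icc a b ∩ f ⁻¹' (Set.Icc (-ζ) ζ) := by
      ext x
      simp [hEdef, abs_le, Set.mem_Icc, and_assoc]
    rw [hEq]
    exact hf.continuousOn.preimage_isClosed_of_isClosed isClosed_Icc isClosed_Icc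
  have hfin : volume E ≠ ⊤ := by
    refine ((measure_mono hEsub).trans_lt ?_).ne
    rw [Real.volume_Icc]; exact ENNReal.ofReal_lt_top
  rw [← ENNReal.ofReal_toReal hfin]
  apply ENNReal.ofReal_le_ofReal
  set μ := (volume E).toReal with hμdef
  rcases eq_or_lt_of_le (ENNReal.toReal_nonneg : (0:ℝ) ≤ μ) with h0 | hμ
  · have hz0 : μ = 0 := h0.symm
    rw [hz0]; positivity
  -- main case
  have hab : a < b := by
    by_contra h
    push_neg at h
    have : volume E = 0 := by
      refine le_antisymm ?_ zero_le
      refine (measure_mono hEsub).trans ?_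
      rw [Real.volume_Icc, ENNReal.ofReal_eq_zero.mpr (by linarith)]
    rw [this] at hμ
    simp at hμ
  obtain ⟨e, hmono, heE, hsep⟩ := selection E a b hEc hEsub k hμ
  set d := μ / (k + 1) with hddef
  have hkpos : (0:ℝ) < (k:ℝ) + 1 := by positivity
  have hd : 0 < d := div_pos hμ hkpos
  set p := Lagrange.interpolate Finset.univ e (fun i => f (e i)) with hpdef
  have hinj : Function.Injective e := hmono.injective
  have hpdeg : p.natDegree ≤ k := by
    by_cases hp0 : p = 0
    · rw [hp0]; simp
    · have hdl := Lagrange.degree_interpolate_lt (s := Finset.univ) (r := fun i => f (e i)) hinj.injOn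
      rw [Finset.card_univ, Fintype.card_fin] at hdl
      exact Nat.lt_succ_iff.mp ((Polynomial.natDegree_lt_iff_degree_lt hp0).mpr
        (by exact_mod_cast hdl))
  have hUD : UniqueDiffOn ℝ (Set.Icc a b) := uniqueDiffOn_Icc hab
  set g : ℕ → ℝ → ℝ :=
    fun m x => iteratedDerivWithin m f (Set.Icc a b) x - (derivative^[m] p).eval x with hgdef
  have hgc : ∀ m ≤ k, ContinuousOn (g m) (Set.Icc a b) := by
    intro m hm
    exact (hf.continuousOn_iteratedDerivWithin (by exact_mod_cast hm) hUD).sub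
      ((derivative^[m] p).continuous_aeval).continuousOn
  have hgd : ∀ m < k, ∀ x ∈ Set.Ioo a b, HasDerivAt (g m) (g (m+1) x) x := by
    intro m hm x hx
    have hxIcc : x ∈ Set.Icc a b := Set.Ioo_subset_Icc_self hx
    have hdiff := hf.differentiableOn_iteratedDerivWithin (m := m)
      (by exact_mod_cast hm) hUD
    have h1 : HasDerivWithinAt (iteratedDerivWithin m f (Set.Icc a b))
        (iteratedDerivWithin (m+1) f (Set.Icc a b) x) (Set.Icc a b) x := by
      have := (hdiff x hxIcc).hasDerivWithinAt
      rwa [← iteratedDerivWithin_succ] at this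
    have h2 := h1.hasDerivAt (Icc_mem_nhds hx.1 hx.2)
    have h3 : HasDerivAt (fun y => (derivative^[m] p).eval y)
        ((derivative^[m+1] p).eval x) x := by
      have := Polynomial.hasDerivAt (derivative^[m] p) x
      rw [Function.iterate_succ_apply']
      exact this
    exact h2.sub h3
  have hgz : ∀ i, g 0 (e i) = 0 := by
    intro i
    have := Lagrange.eval_interpolate_at_node (r := fun i => f (e i)) (s := Finset.univ) hinj.injOn
      (Finset.mem_univ i)
    simp only [hgdef, Function.iterate_zero, id_eq, iteratedDerivWithin_zero, ← hpdef, this]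
    rw [hpdef, this]; ring
  obtain ⟨ξ, hξmem, hξ0⟩ := rolleChain a b k g hgc hgd e hmono
    (fun i => hEsub (heE i)) hgz
  have hval : iteratedDerivWithin k f (Set.Icc a b) ξ = (k.factorial : ℝ) * p.coeff k := by
    have h4 : iteratedDerivWithin k f (Set.Icc a b) ξ = (derivative^[k] p).eval ξ := by
      have := hξ0
      simp only [hgdef] at this
      linarith
    rw [h4, iterDerivConst k p hpdeg, Polynomial.eval_C]
  have hsep' : ∀ i j, i ≠ j → d ≤ |e i - e j| := hsep
  have hcoeff : |p.coeff k| ≤ ((k:ℝ)+1) * ζ * d⁻¹ ^ k :=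
    coeff_interpolate_abs_le k e (fun i => f (e i)) hinj d hd hsep' ζ (fun i => (heE i).2)
  have hAle : A ≤ (k.factorial : ℝ) * |p.coeff k| := by
    have := hder ξ hξmem
    rw [hval, abs_mul, abs_of_nonneg (by positivity : (0:ℝ) ≤ (k.factorial : ℝ))] at this
    exact this
  have hfacpos : (0:ℝ) < (k.factorial : ℝ) := by exact_mod_cast k.factorial_pos
  have h6 : A ≤ (k.factorial : ℝ) * (((k:ℝ)+1) * ζ * d⁻¹ ^ k) :=
    hAle.trans (mul_le_mul_of_nonneg_left hcoeff hfacpos.le)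
  have hdk : (0:ℝ) < d ^ k := pow_pos hd k
  have h7 : (k.factorial : ℝ) * (((k:ℝ)+1) * ζ * d⁻¹ ^ k)
      = ((k+1).factorial : ℝ) * ζ / d ^ k := by
    rw [Nat.factorial_succ]
    push_cast
    rw [inv_pow]
    field_simp
  rw [h7, le_div_iff₀ hdk] at h6
  -- h6 : A * d ^ k ≤ (k+1)! * ζ
  have hμd : μ = ((k:ℝ)+1) * d := by
    rw [hddef]; field_simp
  have hkey : μ ^ k ≤ ((k:ℝ)+1) ^ k * (((k+1).factorial : ℝ) * ζ / A) := by
    rw [hμd, mul_pow]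
    have : d ^ k ≤ ((k+1).factorial : ℝ) * ζ / A := by
      rw [le_div_iff₀ hA]; linarith [h6]
    exact mul_le_mul_of_nonneg_left this (by positivity)
  -- take k-th roots
  have hkne : (k:ℝ) ≠ 0 := by positivity
  have hroot : μ ≤ ((k:ℝ)+1) * (((k+1).factorial : ℝ)) ^ ((1:ℝ)/k) * ((ζ/A)) ^ ((1:ℝ)/k) := by
    have h8 : (μ ^ k) ^ ((1:ℝ)/k) ≤
        (((k:ℝ)+1) ^ k * (((k+1).factorial : ℝ) * ζ / A)) ^ ((1:ℝ)/k) :=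
      Real.rpow_le_rpow (by positivity) hkey (by positivity)
    have h9 : (μ ^ k : ℝ) ^ ((1:ℝ)/k) = μ := by
      rw [← Real.rpow_natCast μ k, ← Real.rpow_mul hμ.le]
      rw [mul_one_div, div_self hkne, Real.rpow_one]
    have h10 : (((k:ℝ)+1) ^ k * (((k+1).factorial : ℝ) * ζ / A)) ^ ((1:ℝ)/k)
        = ((k:ℝ)+1) * (((k+1).factorial : ℝ)) ^ ((1:ℝ)/k) * ((ζ/A)) ^ ((1:ℝ)/k) := by
      rw [Real.mul_rpow (by positivity) (by positivity), mul_div_assoc,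
        Real.mul_rpow (by positivity) (by positivity), ← Real.rpow_natCast ((k:ℝ)+1) k,
        ← Real.rpow_mul (by positivity), mul_one_div, div_self hkne, Real.rpow_one, mul_assoc]
    rw [h9, h10] at h8
    exact h8
  have h11 : (1:ℝ) ≤ (k:ℝ) := by exact_mod_cast hk
  have hX : (0:ℝ) ≤ (((k+1).factorial : ℝ)) ^ ((1:ℝ)/k) := by positivity
  have hY : (0:ℝ) ≤ (ζ/A) ^ ((1:ℝ)/k) := by positivity
  calc μ ≤ ((k:ℝ)+1) * (((k+1).factorial:ℝ))^((1:ℝ)/k) * (ζ/A)^((1:ℝ)/k) := hroot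
    _ ≤ ((k:ℝ) * ((k:ℝ)+1) * (((k+1).factorial:ℝ))^((1:ℝ)/k)) * (ζ/A)^((1:ℝ)/k) := by
        refine mul_le_mul_of_nonneg_right ?_ hY
        nlinarith [mul_nonneg (mul_nonneg (sub_nonneg.mpr h11) hkpos.le) hX]
end

section
/- Let W be an s × s real invertible matrix with all entries bounded in absolute value by M. Then for any vector v ∈ ℝ^s, max_{1 ≤ p ≤ s} |(W v)(p)| ≥ s^{-3/2} · |det W| · ‖v‖₂ / sup_{p,q} |W_{p,q}|, where W_{p,q} denotes the (p,q) cofactor of W. Moreover sup_{p,q} |W_{p,q}| ≤ (s-1)^{s-1} M^{s-1}. -/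
open Matrix

/-- Cramer/Hadamard estimate: for an invertible real `s × s` matrix `W` with entries
bounded by `M`, `max_p |(W v)(p)| ≥ s^{-3/2} |det W| ‖v‖₂ / sup_{p,q} |W_{p,q}|`,
where `W_{p,q}` is the `(p,q)` cofactor (i.e. `adjugate W q p`); moreover
`sup_{p,q} |W_{p,q}| ≤ (s-1)^{s-1} M^{s-1}`. -/
theorem stmt1 (s : ℕ) (hs : 1 ≤ s) (W : Matrix (Fin s) (Fin s) ℝ)
    (hW : IsUnit W.det) (M : ℝ) (hM : ∀ p q, |W p q| ≤ M) (v : Fin s → ℝ) :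
    (∃ p : Fin s,
      (s : ℝ) ^ (-(3 : ℝ) / 2) * (|W.det| * Real.sqrt (∑ i, v i ^ 2)) /
        (⨆ p' : Fin s, ⨆ q' : Fin s, |W.adjugate q' p'|) ≤ |W.mulVec v p|) ∧
    ∀ p q : Fin s, |W.adjugate q p| ≤ ((s : ℝ) - 1) ^ (s - 1) * M ^ (s - 1) := by
  obtain ⟨n, rfl⟩ : ∃ n, s = n + 1 := ⟨s - 1, (Nat.succ_pred_eq_of_pos hs).symm⟩
  have hsR : (0 : ℝ) < ((n + 1 : ℕ) : ℝ) := by positivity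
  have hdet : W.det ≠ 0 := hW.ne_zero
  have hdetpos : 0 < |W.det| := abs_pos.mpr hdet
  set A : ℝ := ⨆ p' : Fin (n + 1), ⨆ q' : Fin (n + 1), |W.adjugate q' p'| with hA
  have hbdd : ∀ (f : Fin (n + 1) → ℝ), BddAbove (Set.range f) :=
    fun f => (Set.finite_range f).bddAbove
  have hAle : ∀ p q : Fin (n + 1), |W.adjugate q p| ≤ A := by
    intro p q
    calc |W.adjugate q p|
        ≤ ⨆ q' : Fin (n + 1), |W.adjugate q' p| :=
          le_ciSup (f := fun q' : Fin (n + 1) => |W.adjugate q' p|) (hbdd _) q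
      _ ≤ A :=
          le_ciSup (f := fun p' : Fin (n + 1) => ⨆ q' : Fin (n + 1), |W.adjugate q' p'|)
            (hbdd _) p
  have hAne : ∃ q p : Fin (n + 1), W.adjugate q p ≠ 0 := by
    by_contra h
    push_neg at h
    have h0 : W.adjugate = 0 := by ext q p; exact h q p
    have h1 := W.adjugate_mul
    rw [h0, Matrix.zero_mul] at h1
    have h2 := congrArg (fun m => m 0 0) h1
    simp at h2
    exact hdet h2.symm
  obtain ⟨q0, p0, hq0⟩ := hAne
  have hApos : 0 < A := lt_of_lt_of_le (abs_pos.mpr hq0) (hAle p0 q0)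
  constructor
  · -- main inequality
    obtain ⟨p, hp⟩ := Finite.exists_max (fun p : Fin (n + 1) => |W.mulVec v p|)
    refine ⟨p, ?_⟩
    have hkey : W.det • v = W.adjugate.mulVec (W.mulVec v) := by
      rw [mulVec_mulVec, adjugate_mul, smul_mulVec, one_mulVec]
    have hvi : ∀ i, |W.det| * |v i| ≤ ((n + 1 : ℕ) : ℝ) * (A * |W.mulVec v p|) := by
      intro i
      have h1 : W.det * v i = ∑ j, W.adjugate i j * W.mulVec v j := by
        have := congrFun hkey i
        simpa [mulVec, dotProduct] using this
      calc |W.det| * |v i| = |∑ j, W.adjugate i j * W.mulVec v j| := by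
            rw [← abs_mul, h1]
        _ ≤ ∑ j, |W.adjugate i j * W.mulVec v j| := Finset.abs_sum_le_sum_abs _ _
        _ ≤ ∑ _j : Fin (n + 1), A * |W.mulVec v p| := by
            refine Finset.sum_le_sum fun j _ => ?_
            rw [abs_mul]
            exact mul_le_mul (hAle j i) (hp j) (abs_nonneg _) hApos.le
        _ = ((n + 1 : ℕ) : ℝ) * (A * |W.mulVec v p|) := by simp
    set m : ℝ := ((n + 1 : ℕ) : ℝ) * (A * |W.mulVec v p|) / |W.det| with hm
    have hmnn : 0 ≤ m := by positivity
    have hvm : ∀ i, |v i| ≤ m := fun i => by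
      rw [hm, le_div_iff₀ hdetpos, mul_comm]
      exact hvi i
    have hsum : Real.sqrt (∑ i, v i ^ 2) ≤ Real.sqrt ((n + 1 : ℕ) : ℝ) * m := by
      have h2 : ∑ i, v i ^ 2 ≤ ((n + 1 : ℕ) : ℝ) * m ^ 2 := by
        calc ∑ i, v i ^ 2 ≤ ∑ _i : Fin (n + 1), m ^ 2 := by
              refine Finset.sum_le_sum fun i _ => ?_
              rw [← sq_abs (v i)]
              exact pow_le_pow_left₀ (abs_nonneg _) (hvm i) 2
          _ = ((n + 1 : ℕ) : ℝ) * m ^ 2 := by simp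
      calc Real.sqrt (∑ i, v i ^ 2) ≤ Real.sqrt (((n + 1 : ℕ) : ℝ) * m ^ 2) :=
            Real.sqrt_le_sqrt h2
        _ = Real.sqrt ((n + 1 : ℕ) : ℝ) * m := by
            rw [Real.sqrt_mul hsR.le, Real.sqrt_sq hmnn]
    have hrpow : ((n + 1 : ℕ) : ℝ) ^ (-(3 : ℝ) / 2) =
        (((n + 1 : ℕ) : ℝ) * Real.sqrt ((n + 1 : ℕ) : ℝ))⁻¹ := by
      rw [show (-(3 : ℝ) / 2) = -(3 / 2) by ring, Real.rpow_neg hsR.le]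
      congr 1
      rw [show (3 : ℝ) / 2 = 1 + 1 / 2 by ring, Real.rpow_add hsR, Real.rpow_one,
        Real.sqrt_eq_rpow]
    have hprod : (0 : ℝ) < ((n + 1 : ℕ) : ℝ) * Real.sqrt ((n + 1 : ℕ) : ℝ) := by positivity
    have h3 : |W.det| * m = ((n + 1 : ℕ) : ℝ) * (A * |W.mulVec v p|) := by
      rw [hm, mul_div_cancel₀ _ (ne_of_gt hdetpos)]
    rw [hrpow, div_le_iff₀ hApos, inv_mul_le_iff₀ hprod]
    calc |W.det| * Real.sqrt (∑ i, v i ^ 2)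
        ≤ |W.det| * (Real.sqrt ((n + 1 : ℕ) : ℝ) * m) :=
          mul_le_mul_of_nonneg_left hsum hdetpos.le
      _ = Real.sqrt ((n + 1 : ℕ) : ℝ) * (|W.det| * m) := by ring
      _ = Real.sqrt ((n + 1 : ℕ) : ℝ) * (((n + 1 : ℕ) : ℝ) * (A * |W.mulVec v p|)) := by
          rw [h3]
      _ = ((n + 1 : ℕ) : ℝ) * Real.sqrt ((n + 1 : ℕ) : ℝ) * (|W.mulVec v p| * A) := by ring
  · -- cofactor bound
    intro p q
    rw [adjugate_fin_succ_eq_det_submatrix, abs_mul, abs_pow, abs_neg, abs_one, one_pow, one_mul]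
    have hMnn : 0 ≤ M := le_trans (abs_nonneg _) (hM 0 0)
    have hd := Matrix.det_le (A := W.submatrix p.succAbove q.succAbove)
      (abv := AbsoluteValue.abs) (x := M) (fun i j => hM _ _)
    simp only [Fintype.card_fin, nsmul_eq_mul] at hd
    calc |(W.submatrix p.succAbove q.succAbove).det|
        ≤ (Nat.factorial n : ℝ) * M ^ n := hd
      _ ≤ (n : ℝ) ^ n * M ^ n := by
          gcongr
          exact_mod_cast Nat.cast_le.mpr (Nat.factorial_le_pow n)
      _ = (((n + 1 : ℕ) : ℝ) - 1) ^ (n + 1 - 1) * M ^ (n + 1 - 1) := by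
          push_cast
          ring_nf
end

section
/- Let θ ∈ ℝ, α ∈ ℝ^d, and let j₁,…,j_s ∈ ℤ^d be lattice sites such that all the values tan π(θ + ½ + j_q·α), q = 1,…,s, are finite. Define the s×s matrix W with W(p,q) = g^{(p)}(θ + ½ + j_q·α), where g(x) = tan(πx). Then det W = C(s) · ∏_{q=1}^s cos^{-2}(π(θ + ½ + j_q·α)) · ∏_{1 ≤ p < q ≤ s} (cot π(θ + j_q·α) − cot π(θ + j_p·α)) for some nonzero constant C(s) depending only on s. -/
open Real Finset Polynomial

noncomputable def tanP : ℕ → Polynomial ℝ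
  | 0 => Polynomial.X
  | (n+1) => (1 + Polynomial.X ^ 2) * (tanP n).derivative

noncomputable def tanQ : ℕ → Polynomial ℝ
  | 0 => 1
  | (n+1) => Polynomial.C 2 * Polynomial.X * tanQ n
      + (1 + Polynomial.X ^ 2) * (tanQ n).derivative

lemma tanP_succ_eq (n : ℕ) :
    tanP (n+1) = (1 + Polynomial.X ^ 2) * tanQ n := by
  induction n with
  | zero => simp [tanP, tanQ]
  | succ n ih =>
    rw [show tanP (n+2) = (1 + Polynomial.X ^ 2) * (tanP (n+1)).derivative from rfl, ih,
      derivative_mul]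
    rw [show tanQ (n+1) = Polynomial.C 2 * Polynomial.X * tanQ n
      + (1 + Polynomial.X ^ 2) * (tanQ n).derivative from rfl]
    simp only [derivative_add, derivative_one, derivative_X_pow]
    push_cast
    ring

lemma tanQ_natDegree_le (n : ℕ) : (tanQ n).natDegree ≤ n := by
  induction n with
  | zero => simp [tanQ]
  | succ n ih =>
    rw [show tanQ (n+1) = Polynomial.C 2 * Polynomial.X * tanQ n
      + (1 + Polynomial.X ^ 2) * (tanQ n).derivative from rfl]
    apply le_trans (Polynomial.natDegree_add_le _ _)
    apply max_le
    · calc (Polynomial.C 2 * Polynomial.X * tanQ n).natDegree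
          ≤ (Polynomial.C 2 * Polynomial.X : Polynomial ℝ).natDegree + (tanQ n).natDegree :=
            Polynomial.natDegree_mul_le
        _ ≤ 1 + n := by
            gcongr
            apply le_trans Polynomial.natDegree_mul_le
            simp
        _ = n + 1 := by omega
    · rcases Nat.eq_zero_or_pos n with h | h
      · subst h; simp [tanQ]
      · calc ((1 + Polynomial.X ^ 2) * (tanQ n).derivative).natDegree
            ≤ (1 + Polynomial.X ^ 2 : Polynomial ℝ).natDegree + (tanQ n).derivative.natDegree :=
              Polynomial.natDegree_mul_le
          _ ≤ 2 + (n - 1) := by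
              gcongr
              · apply le_trans (Polynomial.natDegree_add_le _ _)
                simp
              · exact le_trans (Polynomial.natDegree_derivative_le _) (by omega)
          _ ≤ n + 1 := by omega

lemma tanQ_coeff (n : ℕ) : (tanQ n).coeff n = (Nat.factorial (n+1) : ℝ) := by
  induction n with
  | zero => simp [tanQ]
  | succ n ih =>
    rw [show tanQ (n+1) = Polynomial.C 2 * Polynomial.X * tanQ n
      + (1 + Polynomial.X ^ 2) * (tanQ n).derivative from rfl]
    rw [Polynomial.coeff_add]
    have h1 : (Polynomial.C 2 * Polynomial.X * tanQ n).coeff (n+1)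
        = 2 * (tanQ n).coeff n := by
      rw [mul_assoc, Polynomial.coeff_C_mul, Polynomial.coeff_X_mul]
    have h2 : ((1 + Polynomial.X ^ 2) * (tanQ n).derivative).coeff (n+1)
        = (n : ℝ) * (tanQ n).coeff n := by
      rw [add_mul, one_mul, Polynomial.coeff_add]
      have ha : (tanQ n).derivative.coeff (n+1) = 0 := by
        apply Polynomial.coeff_eq_zero_of_natDegree_lt
        calc (tanQ n).derivative.natDegree ≤ (tanQ n).natDegree - 1 :=
              Polynomial.natDegree_derivative_le _
          _ < n + 1 := by have := tanQ_natDegree_le n; omega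
      rw [ha, zero_add]
      rcases Nat.eq_zero_or_pos n with h | h
      · subst h; simp [tanQ]
      · obtain ⟨m, rfl⟩ := Nat.exists_eq_add_of_le h
        simp only [Nat.add_comm 1 m]
        rw [show m + 1 + 1 = m + 2 from rfl, Polynomial.coeff_X_pow_mul,
          Polynomial.coeff_derivative]
        push_cast
        ring
    rw [h1, h2, ih]
    rw [Nat.factorial_succ (n+1)]
    push_cast
    ring

lemma tanQ_natDegree (n : ℕ) : (tanQ n).natDegree = n := by
  refine le_antisymm (tanQ_natDegree_le n) ?_
  apply Polynomial.le_natDegree_of_ne_zero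
  rw [tanQ_coeff]
  positivity

lemma tanQ_leadingCoeff (n : ℕ) : (tanQ n).leadingCoeff = (Nat.factorial (n+1) : ℝ) := by
  rw [Polynomial.leadingCoeff, tanQ_natDegree, tanQ_coeff]

noncomputable def tanQm (n : ℕ) : Polynomial ℝ :=
  Polynomial.C ((Nat.factorial (n+1) : ℝ)⁻¹) * tanQ n

lemma fact_ne (n : ℕ) : (Nat.factorial (n+1) : ℝ) ≠ 0 := by positivity

lemma tanQm_natDegree (n : ℕ) : (tanQm n).natDegree = n := by
  rw [tanQm, Polynomial.natDegree_C_mul (by simpa using fact_ne n), tanQ_natDegree]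

lemma tanQm_monic (n : ℕ) : (tanQm n).Monic := by
  unfold Polynomial.Monic
  rw [tanQm, Polynomial.leadingCoeff_mul, Polynomial.leadingCoeff_C, tanQ_leadingCoeff]
  exact inv_mul_cancel₀ (fact_ne n)

lemma eval_tanQ_eq (n : ℕ) (t : ℝ) :
    (tanQ n).eval t = (Nat.factorial (n+1) : ℝ) * (tanQm n).eval t := by
  rw [tanQm, Polynomial.eval_mul, Polynomial.eval_C, ← mul_assoc,
    mul_inv_cancel₀ (fact_ne n), one_mul]

lemma iteratedDeriv_tan_pi (n : ℕ) (x : ℝ) (hx : Real.cos (π * x) ≠ 0) :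
    iteratedDeriv n (fun y => Real.tan (π * y)) x
      = π ^ n * (tanP n).eval (Real.tan (π * x)) := by
  induction n generalizing x with
  | zero => simp [tanP]
  | succ n ih =>
    rw [iteratedDeriv_succ]
    have hU : IsOpen {y : ℝ | Real.cos (π * y) ≠ 0} :=
      isOpen_ne.preimage (by continuity)
    have hev : iteratedDeriv n (fun y => Real.tan (π * y)) =ᶠ[nhds x]
        fun y => π ^ n * (tanP n).eval (Real.tan (π * y)) := by
      filter_upwards [hU.mem_nhds hx] with y hy using ih y hy
    rw [hev.deriv_eq]
    have hπ : HasDerivAt (fun y : ℝ => π * y) π x := by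
      simpa using (hasDerivAt_id x).const_mul π
    have h1 : HasDerivAt (fun y : ℝ => Real.tan (π * y))
        (1 / Real.cos (π * x) ^ 2 * π) x := (Real.hasDerivAt_tan hx).comp x hπ
    have h2 : HasDerivAt (fun y => π ^ n * (tanP n).eval (Real.tan (π * y)))
        (π ^ n * ((tanP n).derivative.eval (Real.tan (π * x)) *
          (1 / Real.cos (π * x) ^ 2 * π))) x :=
      ((((tanP n).hasDerivAt _).comp x h1)).const_mul _
    rw [h2.deriv]
    have h3 : (1:ℝ) / Real.cos (π * x) ^ 2 = 1 + Real.tan (π * x) ^ 2 := by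
      rw [one_div, ← Real.inv_one_add_tan_sq hx, inv_inv]
    rw [h3, show tanP (n+1) = (1 + Polynomial.X ^ 2) * (tanP n).derivative from rfl]
    simp only [Polynomial.eval_mul, Polynomial.eval_add, Polynomial.eval_one,
      Polynomial.eval_pow, Polynomial.eval_X]
    ring

lemma tan_shift (y : ℝ) :
    Real.tan (π * (y + 1/2)) = -(Real.cos (π * y) / Real.sin (π * y)) := by
  rw [show π * (y + 1/2) = π * y + π/2 from by ring, Real.tan_eq_sin_div_cos,
    Real.sin_add_pi_div_two, Real.cos_add_pi_div_two, div_neg]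

lemma key (s : ℕ) :
    ∃ C : ℝ, C ≠ 0 ∧ ∀ z : Fin s → ℝ,
      (∀ q, Real.cos (π * (z q + 1/2)) ≠ 0) →
      (Matrix.of fun p q : Fin s =>
          iteratedDeriv (p.val + 1) (fun x => Real.tan (π * x)) (z q + 1/2)).det
        = C * (∏ q : Fin s, (Real.cos (π * (z q + 1/2)))⁻¹ ^ 2) *
          ∏ p : Fin s, ∏ q ∈ Finset.univ.filter (fun q : Fin s => p < q),
            (Real.cos (π * z q) / Real.sin (π * z q) -
             Real.cos (π * z p) / Real.sin (π * z p)) := by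
  classical
  refine ⟨(∏ p : Fin s, ∏ _q ∈ Finset.Ioi p, (-1 : ℝ)) *
      ∏ p : Fin s, (π ^ (p.1 + 1) * (Nat.factorial (p.1 + 1) : ℝ)), ?_, ?_⟩
  · apply mul_ne_zero
    · exact Finset.prod_ne_zero_iff.mpr fun p _ =>
        Finset.prod_ne_zero_iff.mpr fun q _ => by norm_num
    · exact Finset.prod_ne_zero_iff.mpr fun p _ =>
        mul_ne_zero (pow_ne_zero _ Real.pi_ne_zero) (fact_ne _)
  intro z hz
  set v : Fin s → ℝ := fun q => Real.tan (π * (z q + 1/2)) with hv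
  have hIoi : ∀ p : Fin s, Finset.univ.filter (fun q : Fin s => p < q) = Finset.Ioi p :=
    fun p => by ext q; simp
  have e1 : (Matrix.of fun p q : Fin s =>
      iteratedDeriv (p.val + 1) (fun x => Real.tan (π * x)) (z q + 1/2))
      = Matrix.of fun p q : Fin s => (1 + v q ^ 2) *
          ((π ^ (p.1 + 1) * (Nat.factorial (p.1 + 1) : ℝ)) * (tanQm p.1).eval (v q)) := by
    ext p q
    simp only [Matrix.of_apply]
    rw [iteratedDeriv_tan_pi _ _ (hz q), tanP_succ_eq, Polynomial.eval_mul, eval_tanQ_eq]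
    simp only [Polynomial.eval_add, Polynomial.eval_one, Polynomial.eval_pow, Polynomial.eval_X]
    ring
  have d1 : (Matrix.of fun p q : Fin s => (1 + v q ^ 2) *
        ((π ^ (p.1 + 1) * (Nat.factorial (p.1 + 1) : ℝ)) * (tanQm p.1).eval (v q))).det
      = (∏ q : Fin s, (1 + v q ^ 2)) *
        (Matrix.of fun p q : Fin s =>
          (π ^ (p.1 + 1) * (Nat.factorial (p.1 + 1) : ℝ)) * (tanQm p.1).eval (v q)).det :=
    Matrix.det_mul_row _ _
  have d2 : (Matrix.of fun p q : Fin s =>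
        (π ^ (p.1 + 1) * (Nat.factorial (p.1 + 1) : ℝ)) * (tanQm p.1).eval (v q)).det
      = (∏ p : Fin s, (π ^ (p.1 + 1) * (Nat.factorial (p.1 + 1) : ℝ))) *
        (Matrix.of fun p q : Fin s => (tanQm p.1).eval (v q)).det :=
    Matrix.det_mul_column _ _
  have d3 : (Matrix.of fun p q : Fin s => (tanQm p.1).eval (v q)).det
      = (Matrix.vandermonde v).det := by
    rw [Matrix.det_eval_matrixOfPolynomials_eq_det_vandermonde v (fun i => tanQm i.1)
      (fun i => tanQm_natDegree i.1) (fun i => tanQm_monic i.1)]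
    exact Matrix.det_transpose (Matrix.of fun i j : Fin s => (tanQm j.1).eval (v i))
  have hvq : ∀ q, v q = -(Real.cos (π * z q) / Real.sin (π * z q)) := fun q => tan_shift (z q)
  have d5 : ∏ i : Fin s, ∏ j ∈ Finset.Ioi i, (v j - v i)
      = (∏ i : Fin s, ∏ _j ∈ Finset.Ioi i, (-1 : ℝ)) *
        ∏ i : Fin s, ∏ j ∈ Finset.Ioi i,
          (Real.cos (π * z j) / Real.sin (π * z j) -
           Real.cos (π * z i) / Real.sin (π * z i)) := by
    rw [← Finset.prod_mul_distrib]
    refine Finset.prod_congr rfl fun i _ => ?_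
    rw [← Finset.prod_mul_distrib]
    refine Finset.prod_congr rfl fun q _ => ?_
    rw [hvq, hvq]; ring
  have d6 : (∏ q : Fin s, (1 + v q ^ 2)) = ∏ q : Fin s, (Real.cos (π * (z q + 1/2)))⁻¹ ^ 2 := by
    refine Finset.prod_congr rfl fun q _ => ?_
    rw [inv_pow, ← Real.inv_one_add_tan_sq (hz q), inv_inv]
  simp only [hIoi]
  rw [e1, d1, d2, d3, Matrix.det_vandermonde, d5, d6]
  ring

/-- Vandermonde-type determinant identity: with `g(x) = tan(πx)` and
`W(p,q) = g^{(p)}(θ + 1/2 + j_q·α)`, one has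
`det W = C(s) ∏_q cos⁻²(π(θ + 1/2 + j_q·α)) ∏_{p<q} (cot π(θ + j_q·α) − cot π(θ + j_p·α))`
for a nonzero constant `C(s)` depending only on `s` (here `cot = cos / sin`). -/
theorem stmt3 (d s : ℕ) (hs : 1 ≤ s) :
    ∃ C : ℝ, C ≠ 0 ∧
      ∀ (θ : ℝ) (α : Fin d → ℝ) (j : Fin s → Fin d → ℤ),
        (∀ q, Real.cos (π * (θ + 1 / 2 + ∑ k, (j q k : ℝ) * α k)) ≠ 0) →
        (Matrix.of fun p q : Fin s =>
            iteratedDeriv (p.val + 1) (fun x => Real.tan (π * x))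
              (θ + 1 / 2 + ∑ k, (j q k : ℝ) * α k)).det
          = C * (∏ q : Fin s, (Real.cos (π * (θ + 1 / 2 + ∑ k, (j q k : ℝ) * α k)))⁻¹ ^ 2) *
            ∏ p : Fin s, ∏ q ∈ Finset.univ.filter (fun q : Fin s => p < q),
              (Real.cos (π * (θ + ∑ k, (j q k : ℝ) * α k)) /
                 Real.sin (π * (θ + ∑ k, (j q k : ℝ) * α k)) -
               Real.cos (π * (θ + ∑ k, (j p k : ℝ) * α k)) /
                 Real.sin (π * (θ + ∑ k, (j p k : ℝ) * α k))) := by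
  obtain ⟨C, hC0, hC⟩ := key s
  refine ⟨C, hC0, ?_⟩
  intro θ α j hcos
  have hrw : ∀ q : Fin s, θ + 1 / 2 + ∑ k, (j q k : ℝ) * α k
      = (θ + ∑ k, (j q k : ℝ) * α k) + 1 / 2 := fun q => by ring
  simp only [hrw] at hcos ⊢
  exact hC (fun q => θ + ∑ k, (j q k : ℝ) * α k) hcos
end

section
/- Let S ⊂ ℤ^{b+d} be a finite set, and let A, B be matrices indexed by {±} × S with entries satisfying |B_{r,r'}(m,m')| ≤ ε₂(|m−m'|+1)^C e^{−c‖m−m'‖}, |(A^{-1})_{r,r'}(m,m')| ≤ ε₁^{-1} e^{−c‖m−m'‖}, and ‖A^{-1}‖ ≤ ε₁^{-1} (ℓ² operator norm), where ε₁, ε₂, c > 0, C > 1 and ‖(n,j)‖ = |n| + |j|. If 4|S|²(diam S + 1)^C ε₂ ε₁^{-1} ≤ 1/2, then ‖(A+B)^{-1}‖ ≤ 2ε₁^{-1} and |(A+B)^{-1}_{r,r'}(m,m') − (A^{-1})_{r,r'}(m,m')| ≤ ε₁^{-1} e^{−c‖m−m'‖} for all r, r' ∈ {±} and m, m' ∈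 S. -/
open Matrix

/-- Sup norm of an integer vector. -/
def supNormZ {b : ℕ} (n : Fin b → ℤ) : ℕ := Finset.univ.sup fun k => (n k).natAbs

/-- `‖(n,j) − (n',j')‖ = |n − n'| + |j − j'|` with sup norms on each factor. -/
def pairDist {b d : ℕ} (m m' : (Fin b → ℤ) × (Fin d → ℤ)) : ℝ :=
  ((supNormZ (m.1 - m'.1) + supNormZ (m.2 - m'.2) : ℕ) : ℝ)

/-- Diameter of a finite set `S ⊂ ℤ^b × ℤ^d` with respect to `pairDist`. -/
def finsetDiam {b d : ℕ} (S : Finset ((Fin b → ℤ) × (Fin d → ℤ))) : ℝ :=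
  (((S ×ˢ S).sup fun p => supNormZ (p.1.1 - p.2.1) + supNormZ (p.1.2 - p.2.2) : ℕ) : ℝ)

section AuxDist

lemma supNormZ_triangle {b : ℕ} (x y z : Fin b → ℤ) :
    supNormZ (x - z) ≤ supNormZ (x - y) + supNormZ (y - z) := by
  unfold supNormZ
  apply Finset.sup_le
  intro k _
  have h : (x - z) k = (x - y) k + (y - z) k := by simp
  rw [h]
  calc ((x - y) k + (y - z) k).natAbs ≤ ((x - y) k).natAbs + ((y - z) k).natAbs :=
        Int.natAbs_add_le _ _
    _ ≤ _ :=
        add_le_add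
          (Finset.le_sup (f := fun k => ((x - y) k).natAbs) (Finset.mem_univ k))
          (Finset.le_sup (f := fun k => ((y - z) k).natAbs) (Finset.mem_univ k))

lemma pairDist_nonneg {b d : ℕ} (x z : (Fin b → ℤ) × (Fin d → ℤ)) : 0 ≤ pairDist x z :=
  Nat.cast_nonneg _

lemma pairDist_triangle {b d : ℕ} (x y z : (Fin b → ℤ) × (Fin d → ℤ)) :
    pairDist x z ≤ pairDist x y + pairDist y z := by
  unfold pairDist
  have h1 := supNormZ_triangle x.1 y.1 z.1
  have h2 := supNormZ_triangle x.2 y.2 z.2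
  have h : supNormZ (x.1 - z.1) + supNormZ (x.2 - z.2) ≤
      (supNormZ (x.1 - y.1) + supNormZ (x.2 - y.2)) +
      (supNormZ (y.1 - z.1) + supNormZ (y.2 - z.2)) := by omega
  exact_mod_cast h

lemma pairDist_le_finsetDiam {b d : ℕ} {S : Finset ((Fin b → ℤ) × (Fin d → ℤ))}
    {m m' : (Fin b → ℤ) × (Fin d → ℤ)} (hm : m ∈ S) (hm' : m' ∈ S) :
    pairDist m m' ≤ finsetDiam S := by
  unfold pairDist finsetDiam
  have hmem : (m, m') ∈ S ×ˢ S := Finset.mem_product.mpr ⟨hm, hm'⟩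
  have h := Finset.le_sup
    (f := fun p : ((Fin b → ℤ) × (Fin d → ℤ)) × ((Fin b → ℤ) × (Fin d → ℤ)) =>
      supNormZ (p.1.1 - p.2.1) + supNormZ (p.1.2 - p.2.2)) hmem
  exact_mod_cast h

end AuxDist

section AuxNorm

open scoped Matrix.Norms.L2Operator

variable {ι : Type*} [Fintype ι] [DecidableEq ι]

omit [DecidableEq ι] in
lemma euclid_coord_abs_le (v : EuclideanSpace ℝ ι) (x : ι) : |v x| ≤ ‖v‖ := by
  rw [EuclideanSpace.norm_eq]
  have h1 : |v x| = Real.sqrt (‖v x‖ ^ 2) := by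
    rw [Real.sqrt_sq (norm_nonneg _), Real.norm_eq_abs]
  rw [h1]
  exact Real.sqrt_le_sqrt (Finset.single_le_sum (f := fun i => ‖v i‖ ^ 2)
    (fun i _ => by positivity) (Finset.mem_univ x))

lemma entry_abs_le_l2norm (P : Matrix ι ι ℝ) (x z : ι) : |P x z| ≤ ‖P‖ := by
  have h1 : toEuclideanCLM (𝕜 := ℝ) P ((WithLp.equiv _ _).symm (Pi.single z 1))
      = (WithLp.equiv _ _).symm (P *ᵥ Pi.single z 1) := by
    exact toEuclideanCLM_toLp P _
  have h2 : ‖toEuclideanCLM (𝕜 := ℝ) P ((WithLp.equiv _ _).symm (Pi.single z 1))‖ ≤ ‖P‖ := by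
    calc ‖toEuclideanCLM (𝕜 := ℝ) P ((WithLp.equiv _ _).symm (Pi.single z 1))‖
        ≤ ‖toEuclideanCLM (𝕜 := ℝ) P‖ *
            ‖((WithLp.equiv _ _).symm (Pi.single z 1) : EuclideanSpace ℝ ι)‖ :=
          ContinuousLinearMap.le_opNorm _ _
      _ = ‖P‖ * ‖(EuclideanSpace.single z (1 : ℝ))‖ := by
          rw [← Matrix.cstar_norm_def]; rfl
      _ = ‖P‖ := by rw [EuclideanSpace.norm_single]; simp
  have h3 : |P x z| ≤ ‖toEuclideanCLM (𝕜 := ℝ) P ((WithLp.equiv _ _).symm (Pi.single z 1))‖ := by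
    have h4 := euclid_coord_abs_le (toEuclideanCLM (𝕜 := ℝ) P
      ((WithLp.equiv _ _).symm (Pi.single z 1))) x
    rw [h1] at h4 ⊢
    simpa using h4
  exact h3.trans h2

/-- The entry-evaluation continuous linear functional on matrices with the L2 operator norm. -/
noncomputable def entryCLM (x z : ι) : Matrix ι ι ℝ →L[ℝ] ℝ :=
  LinearMap.mkContinuous
    { toFun := fun P => P x z
      map_add' := fun _ _ => rfl
      map_smul' := fun _ _ => rfl } 1
    (fun P => by rw [one_mul]; exact entry_abs_le_l2norm P x z)

lemma entryCLM_apply (x z : ι) (P : Matrix ι ι ℝ) : entryCLM x z P = P x z := rfl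

lemma entry_tsum (f : ℕ → Matrix ι ι ℝ) (hf : Summable f) (x z : ι) :
    (∑' s, f s) x z = ∑' s, f s x z := by
  have h := (entryCLM x z).map_tsum hf
  simpa [entryCLM_apply] using h

lemma entry_summable (f : ℕ → Matrix ι ι ℝ) (hf : Summable f) (x z : ι) :
    Summable (fun s => f s x z) := by
  have h := hf.map (entryCLM x z) (entryCLM x z).continuous
  exact h

lemma l2norm_le_of_entries (P : Matrix ι ι ℝ) (β : ℝ) (hβ : 0 ≤ β)
    (h : ∀ x z, |P x z| ≤ β) : ‖P‖ ≤ (Fintype.card ι : ℝ) * β := by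
  rw [Matrix.l2_opNorm_def]
  apply ContinuousLinearMap.opNorm_le_bound _ (by positivity)
  intro x
  set n : ℝ := (Fintype.card ι : ℝ) with hn
  have hn0 : 0 ≤ n := by positivity
  set y := (Matrix.toEuclideanLin.trans LinearMap.toContinuousLinearMap) P x with hy
  have hyc : ∀ i, y i = ∑ j, P i j * x j := fun i => rfl
  have hx2 : ∑ j, |x j| ^ 2 = ‖x‖ ^ 2 := by
    rw [EuclideanSpace.norm_eq, Real.sq_sqrt (by positivity)]
    simp [Real.norm_eq_abs]
  have hxs : (∑ j, |x j|) ^ 2 ≤ n * ‖x‖ ^ 2 := by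
    calc (∑ j, |x j|) ^ 2 ≤ (Finset.univ.card : ℝ) * ∑ j, |x j| ^ 2 :=
          sq_sum_le_card_mul_sum_sq
      _ = n * ‖x‖ ^ 2 := by rw [Finset.card_univ, hx2]
  have hyi : ∀ i, ‖y i‖ ^ 2 ≤ β ^ 2 * (n * ‖x‖ ^ 2) := by
    intro i
    have h1 : |y i| ≤ β * ∑ j, |x j| := by
      rw [hyc i]
      calc |∑ j, P i j * x j| ≤ ∑ j, |P i j * x j| := Finset.abs_sum_le_sum_abs _ _
        _ ≤ ∑ j, β * |x j| := Finset.sum_le_sum fun j _ => by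
            rw [abs_mul]
            exact mul_le_mul_of_nonneg_right (h i j) (abs_nonneg _)
        _ = β * ∑ j, |x j| := by rw [Finset.mul_sum]
    have h2 : ‖y i‖ ^ 2 ≤ (β * ∑ j, |x j|) ^ 2 := by
      rw [Real.norm_eq_abs]
      exact pow_le_pow_left₀ (abs_nonneg _) h1 2
    calc ‖y i‖ ^ 2 ≤ (β * ∑ j, |x j|) ^ 2 := h2
      _ = β ^ 2 * (∑ j, |x j|) ^ 2 := by ring
      _ ≤ β ^ 2 * (n * ‖x‖ ^ 2) := mul_le_mul_of_nonneg_left hxs (by positivity)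
  rw [EuclideanSpace.norm_eq]
  have hb : Real.sqrt ((n * β * ‖x‖) ^ 2) = n * β * ‖x‖ := Real.sqrt_sq (by positivity)
  rw [← hb]
  apply Real.sqrt_le_sqrt
  calc ∑ i, ‖y i‖ ^ 2 ≤ ∑ _i : ι, β ^ 2 * (n * ‖x‖ ^ 2) := Finset.sum_le_sum fun i _ => hyi i
    _ = n * (β ^ 2 * (n * ‖x‖ ^ 2)) := by rw [Finset.sum_const, Finset.card_univ, nsmul_eq_mul]
    _ = (n * β * ‖x‖) ^ 2 := by ring

lemma conv_bound (g : ι → ι → ℝ) (hg0 : ∀ x z, 0 ≤ g x z)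
    (hgm : ∀ x y z, g x y * g y z ≤ g x z)
    (P Q : Matrix ι ι ℝ) (p q : ℝ) (hp : 0 ≤ p) (hq : 0 ≤ q)
    (hP : ∀ x z, |P x z| ≤ p * g x z) (hQ : ∀ x z, |Q x z| ≤ q * g x z) :
    ∀ x z, |(P * Q) x z| ≤ (Fintype.card ι : ℝ) * p * q * g x z := by
  intro x z
  rw [Matrix.mul_apply]
  calc |∑ y, P x y * Q y z| ≤ ∑ y, |P x y * Q y z| := Finset.abs_sum_le_sum_abs _ _
    _ ≤ ∑ _y : ι, p * q * g x z := by
        apply Finset.sum_le_sum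
        intro y _
        rw [abs_mul]
        calc |P x y| * |Q y z| ≤ (p * g x y) * (q * g y z) :=
              mul_le_mul (hP x y) (hQ y z) (abs_nonneg _) (mul_nonneg hp (hg0 x y))
          _ = p * q * (g x y * g y z) := by ring
          _ ≤ p * q * g x z := mul_le_mul_of_nonneg_left (hgm x y z) (mul_nonneg hp hq)
    _ = (Fintype.card ι : ℝ) * p * q * g x z := by
        rw [Finset.sum_const, Finset.card_univ, nsmul_eq_mul]; ring

lemma pow_entry_bound (g : ι → ι → ℝ) (hg0 : ∀ x z, 0 ≤ g x z)
    (hgm : ∀ x y z, g x y * g y z ≤ g x z)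
    (N : Matrix ι ι ℝ) (δ : ℝ) (hδ : 0 ≤ δ) (hN : ∀ x z, |N x z| ≤ δ * g x z) :
    ∀ (s : ℕ) (x z : ι),
      |(N ^ (s + 1)) x z| ≤ δ * ((Fintype.card ι : ℝ) * δ) ^ s * g x z := by
  intro s
  induction s with
  | zero => simpa using hN
  | succ s ih =>
    intro x z
    have h1 : (N ^ (s + 1 + 1)) = (N ^ (s + 1)) * N := by rw [pow_succ]
    rw [h1]
    have hns : 0 ≤ δ * ((Fintype.card ι : ℝ) * δ) ^ s :=
      mul_nonneg hδ (pow_nonneg (mul_nonneg (Nat.cast_nonneg _) hδ) s)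
    have h2 := conv_bound g hg0 hgm (N ^ (s + 1)) N (δ * ((Fintype.card ι : ℝ) * δ) ^ s) δ
      hns hδ ih hN x z
    calc |((N ^ (s + 1)) * N) x z|
        ≤ (Fintype.card ι : ℝ) * (δ * ((Fintype.card ι : ℝ) * δ) ^ s) * δ * g x z := h2
      _ = δ * ((Fintype.card ι : ℝ) * δ) ^ (s + 1) * g x z := by ring

end AuxNorm

section Main

open scoped Matrix.Norms.L2Operator

set_option maxHeartbeats 1000000 in
/-- Neumann series perturbation lemma: under the stated bounds on `B`, `A⁻¹`
and the smallness condition `4|S|²(diam S + 1)^C ε₂ ε₁⁻¹ ≤ 1/2`, the matrix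
`A + B` is invertible with `‖(A+B)⁻¹‖ ≤ 2ε₁⁻¹` and
`|(A+B)⁻¹(m,m') − A⁻¹(m,m')| ≤ ε₁⁻¹ e^{−c‖m−m'‖}`. -/
theorem stmt10 (b d : ℕ) (S : Finset ((Fin b → ℤ) × (Fin d → ℤ)))
    (A B : Matrix (Bool × S) (Bool × S) ℝ)
    (ε₁ ε₂ c C : ℝ) (hε₁ : 0 < ε₁) (hε₂ : 0 < ε₂) (hc : 0 < c) (hC : 1 < C)
    (hAdet : IsUnit A.det)
    (hB : ∀ (r r' : Bool) (m m' : S),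
      |B (r, m) (r', m')| ≤
        ε₂ * (pairDist m.1 m'.1 + 1) ^ C * Real.exp (-c * pairDist m.1 m'.1))
    (hAinv : ∀ (r r' : Bool) (m m' : S),
      |A⁻¹ (r, m) (r', m')| ≤ ε₁⁻¹ * Real.exp (-c * pairDist m.1 m'.1))
    (hAop : ‖Matrix.toEuclideanCLM (𝕜 := ℝ) A⁻¹‖ ≤ ε₁⁻¹)
    (hsmall : 4 * (S.card : ℝ) ^ 2 * (finsetDiam S + 1) ^ C * ε₂ * ε₁⁻¹ ≤ 1 / 2) :
    IsUnit (A + B).det ∧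
      ‖Matrix.toEuclideanCLM (𝕜 := ℝ) (A + B)⁻¹‖ ≤ 2 * ε₁⁻¹ ∧
      ∀ (r r' : Bool) (m m' : S),
        |(A + B)⁻¹ (r, m) (r', m') - A⁻¹ (r, m) (r', m')| ≤
          ε₁⁻¹ * Real.exp (-c * pairDist m.1 m'.1) := by
  classical
  haveI : CompleteSpace (Matrix (Bool × S) (Bool × S) ℝ) := FiniteDimensional.complete ℝ _
  set g : (Bool × S) → (Bool × S) → ℝ :=
    fun x z => Real.exp (-c * pairDist x.2.1 z.2.1) with hgdef
  have hg0 : ∀ x z, 0 < g x z := fun x z => Real.exp_pos _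
  have hg1 : ∀ x z, g x z ≤ 1 := by
    intro x z
    apply Real.exp_le_one_iff.mpr
    have := pairDist_nonneg x.2.1 z.2.1
    nlinarith
  have hgm : ∀ x y z, g x y * g y z ≤ g x z := by
    intro x y z
    rw [hgdef, ← Real.exp_add]
    apply Real.exp_le_exp.mpr
    have := pairDist_triangle x.2.1 y.2.1 z.2.1
    nlinarith
  set n : ℝ := (Fintype.card (Bool × S) : ℝ) with hn
  have hn0 : 0 ≤ n := Nat.cast_nonneg _
  have hncard : n = 2 * (S.card : ℝ) := by
    rw [hn]
    simp [Fintype.card_prod]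
  set K : ℝ := ε₂ * (finsetDiam S + 1) ^ C with hK
  have hdiam0 : (0 : ℝ) ≤ finsetDiam S := Nat.cast_nonneg _
  have hK0 : 0 ≤ K := mul_nonneg hε₂.le (Real.rpow_nonneg (by linarith) _)
  have hBg : ∀ x z : Bool × S, |B x z| ≤ K * g x z := by
    rintro ⟨r, m⟩ ⟨r', m'⟩
    refine (hB r r' m m').trans ?_
    have h1 : (pairDist m.1 m'.1 + 1) ^ C ≤ (finsetDiam S + 1) ^ C :=
      Real.rpow_le_rpow (by have := pairDist_nonneg m.1 m'.1; linarith)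
        (by have := pairDist_le_finsetDiam m.2 m'.2; linarith) (by linarith)
    calc ε₂ * (pairDist m.1 m'.1 + 1) ^ C * Real.exp (-c * pairDist m.1 m'.1)
        ≤ ε₂ * (finsetDiam S + 1) ^ C * Real.exp (-c * pairDist m.1 m'.1) := by
          apply mul_le_mul_of_nonneg_right _ (Real.exp_pos _).le
          exact mul_le_mul_of_nonneg_left h1 hε₂.le
      _ = K * g (r, m) (r', m') := rfl
  have hAg : ∀ x z : Bool × S, |A⁻¹ x z| ≤ ε₁⁻¹ * g x z := by
    rintro ⟨r, m⟩ ⟨r', m'⟩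
    exact hAinv r r' m m'
  have hε₁inv0 : 0 ≤ ε₁⁻¹ := inv_nonneg.mpr hε₁.le
  set M : Matrix (Bool × S) (Bool × S) ℝ := A⁻¹ * B with hM
  set δ : ℝ := n * ε₁⁻¹ * K with hδ
  have hδ0 : 0 ≤ δ := mul_nonneg (mul_nonneg hn0 hε₁inv0) hK0
  have hMg : ∀ x z, |M x z| ≤ δ * g x z := by
    intro x z
    exact conv_bound g (fun x z => (hg0 x z).le) hgm A⁻¹ B ε₁⁻¹ K hε₁inv0 hK0 hAg hBg x z
  have hnδ : n * δ ≤ 1 / 2 := by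
    have heq : n * δ = 4 * (S.card : ℝ) ^ 2 * (finsetDiam S + 1) ^ C * ε₂ * ε₁⁻¹ := by
      rw [hδ, hncard]; ring
    rw [heq]; exact hsmall
  have hnδ0 : 0 ≤ n * δ := mul_nonneg hn0 hδ0
  have hMentry : ∀ x z, |M x z| ≤ δ := by
    intro x z
    refine (hMg x z).trans ?_
    nlinarith [hg1 x z, (hg0 x z).le]
  have hMnorm : ‖M‖ ≤ n * δ := l2norm_le_of_entries M δ hδ0 hMentry
  have hMhalf : ‖M‖ ≤ 1 / 2 := hMnorm.trans hnδ
  have hMlt : ‖(-M)‖ < 1 := by rw [norm_neg]; linarith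
  set u : (Matrix (Bool × S) (Bool × S) ℝ)ˣ := Units.oneSub (-M) hMlt with hu
  have huval : (u : Matrix (Bool × S) (Bool × S) ℝ) = 1 + M := by
    rw [hu, Units.val_oneSub, sub_neg_eq_add]
  have hAB : A + B = A * (1 + M) := by
    rw [mul_add, mul_one, hM, ← Matrix.mul_assoc, Matrix.mul_nonsing_inv A hAdet,
      Matrix.one_mul]
  have h1Munit : IsUnit ((1 : Matrix (Bool × S) (Bool × S) ℝ) + M) := huval ▸ u.isUnit
  have h1Mdet : IsUnit ((1 : Matrix (Bool × S) (Bool × S) ℝ) + M).det :=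
    (Matrix.isUnit_iff_isUnit_det _).mp h1Munit
  have hABdet : IsUnit (A + B).det := by
    rw [hAB, Matrix.det_mul]
    exact hAdet.mul h1Mdet
  have hYdef : ((1 : Matrix (Bool × S) (Bool × S) ℝ) + M)⁻¹ = ↑u⁻¹ :=
    Matrix.inv_eq_right_inv (by rw [← huval]; exact u.mul_inv)
  have hABinv : (A + B)⁻¹ = ((1 : Matrix (Bool × S) (Bool × S) ℝ) + M)⁻¹ * A⁻¹ := by
    rw [hAB, Matrix.mul_inv_rev]
  have hAinvnorm : ‖A⁻¹‖ ≤ ε₁⁻¹ := by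
    rw [Matrix.cstar_norm_def]; exact hAop
  refine ⟨hABdet, ?_, ?_⟩
  · -- operator norm bound
    rw [← Matrix.cstar_norm_def, hABinv]
    have hY1 : ((1 : Matrix (Bool × S) (Bool × S) ℝ) + M)⁻¹ * (1 + M) = 1 :=
      Matrix.nonsing_inv_mul _ h1Mdet
    have hYeq : ((1 : Matrix (Bool × S) (Bool × S) ℝ) + M)⁻¹ =
        1 - ((1 + M)⁻¹ * M) := by
      have h2 : ((1 : Matrix (Bool × S) (Bool × S) ℝ) + M)⁻¹ * 1 + (1 + M)⁻¹ * M = 1 := by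
        rw [← mul_add]; exact hY1
      rw [mul_one] at h2
      exact eq_sub_of_add_eq h2
    have hone : ‖(1 : Matrix (Bool × S) (Bool × S) ℝ)‖ ≤ 1 := by
      calc ‖(1 : Matrix (Bool × S) (Bool × S) ℝ)‖
          = ‖(toEuclideanCLM (𝕜 := ℝ) (1 : Matrix (Bool × S) (Bool × S) ℝ))‖ := rfl
        _ = ‖(1 : EuclideanSpace ℝ (Bool × S) →L[ℝ] EuclideanSpace ℝ (Bool × S))‖ := by
            rw [_root_.map_one]
        _ ≤ 1 := by rw [ContinuousLinearMap.one_def]; exact ContinuousLinearMap.norm_id_le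
    have hYn : ‖((1 : Matrix (Bool × S) (Bool × S) ℝ) + M)⁻¹‖ ≤ 2 := by
      have h3 : ‖((1 : Matrix (Bool × S) (Bool × S) ℝ) + M)⁻¹‖ ≤
          1 + ‖((1 : Matrix (Bool × S) (Bool × S) ℝ) + M)⁻¹‖ * ‖M‖ := by
        conv_lhs => rw [hYeq]
        refine (norm_sub_le _ _).trans ?_
        exact add_le_add hone (norm_mul_le _ _)
      nlinarith [norm_nonneg ((1 : Matrix (Bool × S) (Bool × S) ℝ) + M)⁻¹,
        mul_le_mul_of_nonneg_left hMhalf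
          (norm_nonneg ((1 : Matrix (Bool × S) (Bool × S) ℝ) + M)⁻¹)]
    calc ‖((1 : Matrix (Bool × S) (Bool × S) ℝ) + M)⁻¹ * A⁻¹‖
        ≤ ‖((1 : Matrix (Bool × S) (Bool × S) ℝ) + M)⁻¹‖ * ‖A⁻¹‖ := norm_mul_le _ _
      _ ≤ 2 * ε₁⁻¹ := mul_le_mul hYn hAinvnorm (norm_nonneg _) (by norm_num)
  · -- entrywise bound
    have hsumM : Summable (fun s : ℕ => (-M) ^ s) := summable_geometric_of_norm_lt_one hMlt
    have hNg : ∀ x z, |(-M) x z| ≤ δ * g x z := by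
      intro x z
      rw [Matrix.neg_apply, abs_neg]
      exact hMg x z
    have hpow := pow_entry_bound g (fun x z => (hg0 x z).le) hgm (-M) δ hδ0 hNg
    have hYx : ∀ x z, ((1 : Matrix (Bool × S) (Bool × S) ℝ) + M)⁻¹ x z -
        (1 : Matrix (Bool × S) (Bool × S) ℝ) x z = ∑' s : ℕ, ((-M) ^ (s + 1)) x z := by
      intro x z
      have h1 : ((1 : Matrix (Bool × S) (Bool × S) ℝ) + M)⁻¹ = ∑' s : ℕ, (-M) ^ s := by
        rw [hYdef]; rfl
      have h2 : (∑' s : ℕ, (-M) ^ s) x z = ∑' s : ℕ, ((-M) ^ s) x z :=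
        entry_tsum _ hsumM x z
      have hsR : Summable (fun s : ℕ => ((-M) ^ s) x z) := entry_summable _ hsumM x z
      rw [h1, h2, hsR.tsum_eq_zero_add]
      simp
    have hW : ∀ x z, |(((1 : Matrix (Bool × S) (Bool × S) ℝ) + M)⁻¹ - 1) x z| ≤
        2 * δ * g x z := by
      intro x z
      rw [Matrix.sub_apply, hYx x z]
      have hsb : Summable (fun s : ℕ => δ * (n * δ) ^ s * g x z) :=
        ((summable_geometric_of_lt_one hnδ0 (by linarith)).mul_left δ).mul_right _
      have hb := tsum_of_norm_bounded hsb.hasSum (fun s => by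
        rw [Real.norm_eq_abs]; exact hpow s x z)
      rw [Real.norm_eq_abs] at hb
      have hval : ∑' s : ℕ, δ * (n * δ) ^ s * g x z = δ * (1 - n * δ)⁻¹ * g x z := by
        rw [tsum_mul_right, tsum_mul_left, tsum_geometric_of_lt_one hnδ0 (by linarith)]
      rw [hval] at hb
      refine hb.trans ?_
      have hinv2 : (1 - n * δ)⁻¹ ≤ 2 := by
        rw [inv_le_comm₀ (by linarith) (by norm_num)]
        linarith
      have hinv0 : 0 ≤ (1 - n * δ)⁻¹ := inv_nonneg.mpr (by linarith)
      nlinarith [(hg0 x z).le, mul_le_mul_of_nonneg_left hinv2 hδ0]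
    have hdiff : (A + B)⁻¹ - A⁻¹ =
        (((1 : Matrix (Bool × S) (Bool × S) ℝ) + M)⁻¹ - 1) * A⁻¹ := by
      rw [hABinv, Matrix.sub_mul, Matrix.one_mul]
    have hfin := conv_bound g (fun x z => (hg0 x z).le) hgm
      (((1 : Matrix (Bool × S) (Bool × S) ℝ) + M)⁻¹ - 1) A⁻¹ (2 * δ) ε₁⁻¹
      (by linarith) hε₁inv0 hW hAg
    intro r r' m m'
    have h1 : (A + B)⁻¹ (r, m) (r', m') - A⁻¹ (r, m) (r', m') =
        ((A + B)⁻¹ - A⁻¹) (r, m) (r', m') := (Matrix.sub_apply _ _ _ _).symm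
    rw [h1, hdiff]
    refine (hfin (r, m) (r', m')).trans ?_
    have h2 : n * (2 * δ) * ε₁⁻¹ ≤ ε₁⁻¹ := by
      nlinarith
    have h3 : g (r, m) (r', m') = Real.exp (-c * pairDist m.1 m'.1) := rfl
    rw [← h3]
    exact mul_le_mul_of_nonneg_right h2 (hg0 _ _).le

end Main
end

section
/- Let ω⁽⁰⁾ = (μ_{β₁},…,μ_{β_b}) ∈ ℝ^b with β₁,…,β_b ∈ ℤ^d distinct, and let (μ_j)_{j∈ℤ^d} be reals satisfying: (a) |μ_j − μ_{j'}| > 2δ^{1/8} for all distinct j, j' with |j|, |j'| ≤ 3N; (b) |n·ω⁽⁰⁾ + μ_j − μ_{j'}| > 2δ^{1/8} for all (n,j,j') ∈ [−2N,2N]^b × ([−3N,3N]^d)² outside {(−e_k + e_{k'}, β_k, β_{k'}) : k,k'} ∪ {(0,j,j)}. Then for any σ ∈ ℝ, the set A₁^σ = {(n,j) ∈ [−N,N]^b × [−3N,3N]^d : |σ + n·ω⁽⁰⁾ + μ_j| ≤ δ^{1/8}} has cardinality at most b. -/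
/-- Counting resonances: under the separation conditions (a) and (b) on the
eigenvalues `μ_j` and the tangential frequency `ω⁽⁰⁾ = (μ_{β₁},…,μ_{β_b})`, for any
`σ ∈ ℝ` the set `A₁^σ = {(n,j) ∈ [−N,N]^b × [−3N,3N]^d : |σ + n·ω⁽⁰⁾ + μ_j| ≤ δ^{1/8}}`
has at most `b` elements. -/
theorem stmt11 (b d N : ℕ) (hb : 1 ≤ b) (hN : 1 ≤ N) (δ : ℝ) (hδ : 0 < δ)
    (β : Fin b → Fin d → ℤ) (hβ : Function.Injective β)
    (μ : (Fin d → ℤ) → ℝ)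
    (ha : ∀ j j' : Fin d → ℤ, j ≠ j' →
      (∀ k, |j k| ≤ 3 * (N : ℤ)) → (∀ k, |j' k| ≤ 3 * (N : ℤ)) →
      2 * δ ^ ((1 : ℝ) / 8) < |μ j - μ j'|)
    (hb2 : ∀ (n : Fin b → ℤ) (j j' : Fin d → ℤ),
      (∀ k, |n k| ≤ 2 * (N : ℤ)) →
      (∀ k, |j k| ≤ 3 * (N : ℤ)) → (∀ k, |j' k| ≤ 3 * (N : ℤ)) →
      (¬ ∃ k k' : Fin b, n = -Pi.single k 1 + Pi.single k' 1 ∧ j = β k ∧ j' = β k') →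
      ¬ (n = 0 ∧ j = j') →
      2 * δ ^ ((1 : ℝ) / 8) < |(∑ k, (n k : ℝ) * μ (β k)) + μ j - μ j'|)
    (σ : ℝ) :
    Set.ncard {p : (Fin b → ℤ) × (Fin d → ℤ) |
        (∀ k, |p.1 k| ≤ (N : ℤ)) ∧ (∀ k, |p.2 k| ≤ 3 * (N : ℤ)) ∧
        |σ + (∑ k, (p.1 k : ℝ) * μ (β k)) + μ p.2| ≤ δ ^ ((1 : ℝ) / 8)} ≤ b := by
  by_contra hcon
  push_neg at hcon
  set A : Set ((Fin b → ℤ) × (Fin d → ℤ)) :=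
    {p | (∀ k, |p.1 k| ≤ (N : ℤ)) ∧ (∀ k, |p.2 k| ≤ 3 * (N : ℤ)) ∧
      |σ + (∑ k, (p.1 k : ℝ) * μ (β k)) + μ p.2| ≤ δ ^ ((1 : ℝ) / 8)} with hA
  have hδ' : 0 < δ ^ ((1 : ℝ) / 8) := Real.rpow_pos_of_pos hδ _
  -- algebraic identity
  have heq : ∀ p q : (Fin b → ℤ) × (Fin d → ℤ),
      (∑ k, ((p.1 - q.1) k : ℝ) * μ (β k)) + μ p.2 - μ q.2 =
      (σ + (∑ k, (p.1 k : ℝ) * μ (β k)) + μ p.2)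
        - (σ + (∑ k, (q.1 k : ℝ) * μ (β k)) + μ q.2) := by
    intro p q
    simp only [Pi.sub_apply, Int.cast_sub, sub_mul, Finset.sum_sub_distrib]
    ring
  have hbound : ∀ p q : (Fin b → ℤ) × (Fin d → ℤ), p ∈ A → q ∈ A →
      ∀ k, |(p.1 - q.1) k| ≤ 2 * (N : ℤ) := by
    intro p q hp hq k
    calc |(p.1 - q.1) k| = |p.1 k - q.1 k| := rfl
      _ ≤ |p.1 k| + |q.1 k| := abs_sub _ _
      _ ≤ (N : ℤ) + N := add_le_add (hp.1 k) (hq.1 k)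
      _ = 2 * N := by ring
  have hsmall : ∀ p q : (Fin b → ℤ) × (Fin d → ℤ), p ∈ A → q ∈ A →
      |(∑ k, ((p.1 - q.1) k : ℝ) * μ (β k)) + μ p.2 - μ q.2| ≤ 2 * δ ^ ((1 : ℝ) / 8) := by
    intro p q hp hq
    rw [heq p q]
    calc |(σ + (∑ k, (p.1 k : ℝ) * μ (β k)) + μ p.2)
        - (σ + (∑ k, (q.1 k : ℝ) * μ (β k)) + μ q.2)|
        ≤ |σ + (∑ k, (p.1 k : ℝ) * μ (β k)) + μ p.2|
          + |σ + (∑ k, (q.1 k : ℝ) * μ (β k)) + μ q.2| := abs_sub _ _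
      _ ≤ δ ^ ((1 : ℝ) / 8) + δ ^ ((1 : ℝ) / 8) := add_le_add hp.2.2 hq.2.2
      _ = 2 * δ ^ ((1 : ℝ) / 8) := by ring
  -- step 1: equal j-components force equality
  have hsame : ∀ p q : (Fin b → ℤ) × (Fin d → ℤ), p ∈ A → q ∈ A → p.2 = q.2 → p = q := by
    intro p q hp hq hj
    by_contra hne
    have hn1 : p.1 ≠ q.1 := fun h => hne (Prod.ext h hj)
    have hnz : p.1 - q.1 ≠ 0 := sub_ne_zero.mpr hn1
    have hexc : ¬ ∃ k k' : Fin b,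
        p.1 - q.1 = -Pi.single k 1 + Pi.single k' 1 ∧ p.2 = β k ∧ q.2 = β k' := by
      rintro ⟨k, k', hn, hjk, hjk'⟩
      have hkk : k = k' := hβ (by rw [← hjk, ← hjk', hj])
      subst hkk
      apply hnz
      rw [hn]; simp
    have := hb2 (p.1 - q.1) p.2 q.2 (hbound p q hp hq) hp.2.1 hq.2.1 hexc
      (fun h => hnz h.1)
    have h2 := hsmall p q hp hq
    linarith
  -- finiteness
  have hfin : A.Finite := by
    by_contra hinf
    rw [Set.Infinite.ncard hinf] at hcon
    omega
  -- step 2: every element's j-component lies in the range of β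
  have hrange : ∀ p q : (Fin b → ℤ) × (Fin d → ℤ), p ∈ A → q ∈ A → p.2 ≠ q.2 →
      ∃ k, p.2 = β k := by
    intro p q hp hq hjne
    by_contra hnk
    push_neg at hnk
    have hexc : ¬ ∃ k k' : Fin b,
        p.1 - q.1 = -Pi.single k 1 + Pi.single k' 1 ∧ p.2 = β k ∧ q.2 = β k' := by
      rintro ⟨k, k', hn, hjk, hjk'⟩
      exact hnk k hjk
    have := hb2 (p.1 - q.1) p.2 q.2 (hbound p q hp hq) hp.2.1 hq.2.1 hexc
      (fun h => hjne h.2)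
    have h2 := hsmall p q hp hq
    linarith
  -- every p ∈ A has a companion q ≠ p
  have hother : ∀ p ∈ A, ∃ q ∈ A, q ≠ p := by
    intro p hp
    by_contra h
    push_neg at h
    have hsub : A ⊆ {p} := fun q hq => h q hq
    have := Set.ncard_le_ncard hsub (Set.finite_singleton p)
    rw [Set.ncard_singleton] at this
    omega
  have hk : ∀ p ∈ A, ∃ k, p.2 = β k := by
    intro p hp
    obtain ⟨q, hq, hqp⟩ := hother p hp
    rcases eq_or_ne p.2 q.2 with h | h
    · exact absurd (hsame p q hp hq h).symm hqp
    · exact hrange p q hp hq h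
  -- inject A into Fin b
  classical
  let f : A → Fin b := fun p => Classical.choose (hk p.1 p.2)
  have hf : Function.Injective f := by
    intro x y hxy
    have hx : (x : (Fin b → ℤ) × (Fin d → ℤ)).2 = β (f x) :=
      Classical.choose_spec (hk x.1 x.2)
    have hy : (y : (Fin b → ℤ) × (Fin d → ℤ)).2 = β (f y) :=
      Classical.choose_spec (hk y.1 y.2)
    have hj : (x : (Fin b → ℤ) × (Fin d → ℤ)).2 = (y : (Fin b → ℤ) × (Fin d → ℤ)).2 := by
      rw [hx, hy, hxy]
    exact Subtype.ext (hsame x.1 y.1 x.2 y.2 hj)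
  have hcard := Nat.card_le_card_of_injective f hf
  rw [Nat.card_coe_set_eq] at hcard
  have hfb : Nat.card (Fin b) = b := by simp
  omega
end

section
/- Let H be a self-adjoint operator on ℓ²(ℤ^d) with a complete orthonormal system of eigenfunctions {ψ_s}_{s∈ℤ^d}, each satisfying |ψ_s(l) − 1| ≤ ε^{1/5} at its localization center l (i.e. the point where |ψ_s| attains its maximum, assuming ψ_s(l) > 0 normalization in modulus) and |ψ_s(x)| ≤ ε^{(1/8)|x−l|₁} for x ≠ l, with 0 < ε small enough depending on d. Then for each lattice site x ∈ ℤ^d there exists exactly one eigenfunction in the family peaking at x. -/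
/-- Geometric bound: finite sums of `q ^ n` over `ℕ` are at most `4/3` when `q ≤ 1/4`. -/
lemma aux_sum_pow_le (q : ℝ) (hq0 : 0 ≤ q) (hq : q ≤ 1/4) (T : Finset ℕ) :
    ∑ n ∈ T, q ^ n ≤ 4/3 := by
  have hsub : T ⊆ Finset.range (T.sup id + 1) := by
    intro n hn
    simp only [Finset.mem_range]
    exact Nat.lt_succ_of_le (Finset.le_sup (f := id) hn)
  calc ∑ n ∈ T, q ^ n ≤ ∑ n ∈ Finset.range (T.sup id + 1), q ^ n := by
        refine Finset.sum_le_sum_of_subset_of_nonneg hsub ?_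
        intro i _ _; positivity
    _ ≤ ∑ n ∈ Finset.range (T.sup id + 1), ((1:ℝ)/4) ^ n := by
        refine Finset.sum_le_sum ?_
        intro i _; exact pow_le_pow_left₀ hq0 hq i
    _ ≤ 4/3 := by
        rw [geom_sum_eq (by norm_num : ((1:ℝ)/4) ≠ 1), div_le_iff_of_neg (by norm_num)]
        have : (0:ℝ) ≤ ((1:ℝ)/4) ^ (T.sup id + 1) := by positivity
        nlinarith

/-- One-dimensional bound: for `q ≤ 1/4`, sums of `q^{|c - j|}` over finite sets of
integers are at most `3`. -/
lemma aux_sum_int_le (q : ℝ) (hq0 : 0 ≤ q) (hq : q ≤ 1/4) (c : ℤ) (J : Finset ℤ) :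
    ∑ j ∈ J, q ^ (c - j).natAbs ≤ 3 := by
  classical
  set P := J.filter (fun j => j ≤ c) with hP
  set Q := J.filter (fun j => ¬ j ≤ c) with hQ
  have hsplit : ∑ j ∈ J, q ^ (c - j).natAbs
      = ∑ j ∈ P, q ^ (c - j).natAbs + ∑ j ∈ Q, q ^ (c - j).natAbs := by
    rw [hP, hQ, Finset.sum_filter_add_sum_filter_not]
  have keyP : ∑ j ∈ P, q ^ (c - j).natAbs ≤ 4/3 := by
    have hinj : ∀ a ∈ P, ∀ b ∈ P, (c - a).natAbs = (c - b).natAbs → a = b := by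
      intro a ha b hb hab
      simp only [hP, Finset.mem_filter] at ha hb
      omega
    calc ∑ j ∈ P, q ^ (c - j).natAbs
        = ∑ n ∈ P.image (fun j => (c - j).natAbs), q ^ n :=
          (Finset.sum_image hinj).symm
      _ ≤ 4/3 := aux_sum_pow_le q hq0 hq _
  have keyQ : ∑ j ∈ Q, q ^ (c - j).natAbs ≤ 4/3 := by
    have hinj : ∀ a ∈ Q, ∀ b ∈ Q, (c - a).natAbs = (c - b).natAbs → a = b := by
      intro a ha b hb hab
      simp only [hQ, Finset.mem_filter] at ha hb
      omega
    calc ∑ j ∈ Q, q ^ (c - j).natAbs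
        = ∑ n ∈ Q.image (fun j => (c - j).natAbs), q ^ n :=
          (Finset.sum_image hinj).symm
      _ ≤ 4/3 := aux_sum_pow_le q hq0 hq _
  linarith [hsplit, keyP, keyQ]

/-- rpow computation: `(a ^ (m : ℕ)) ^ (1/(m:ℝ)) = a` for `0 ≤ a`. -/
lemma aux_rpow_inv (a : ℝ) (ha : 0 ≤ a) (m : ℕ) (hm : (m:ℝ) ≠ 0) :
    ((a ^ m : ℝ)) ^ ((1:ℝ)/(m:ℝ)) = a := by
  rw [← Real.rpow_natCast a m, ← Real.rpow_mul ha]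
  rw [mul_one_div, div_self hm, Real.rpow_one]

/-- Uniqueness of localization centers: for `ε` small enough (depending only on `d`),
if `{ψ_s}` is a complete orthonormal family on `ℓ²(ℤ^d)` whose members satisfy
`|ψ_s(l) − 1| ≤ ε^{1/5}` and `|ψ_s(x)| ≤ ε^{(1/8)|x−l|₁}` at every localization
center `l`, then for each lattice site `x` there is exactly one member of the
family peaking at `x`. -/
theorem stmt12 (d : ℕ) (hd : 1 ≤ d) :
    ∃ ε₀ : ℝ, 0 < ε₀ ∧ ∀ (ε : ℝ) (ψ : (Fin d → ℤ) → (Fin d → ℤ) → ℝ),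
      0 < ε → ε ≤ ε₀ →
      (∀ s s' : Fin d → ℤ,
        ∑' x : Fin d → ℤ, ψ s x * ψ s' x = if s = s' then 1 else 0) →
      (∀ x : Fin d → ℤ, ∑' s : Fin d → ℤ, ψ s x ^ 2 = 1) →
      (∀ s : Fin d → ℤ, ∃ l : Fin d → ℤ, ∀ x, |ψ s x| ≤ |ψ s l|) →
      (∀ s l : Fin d → ℤ, (∀ x, |ψ s x| ≤ |ψ s l|) →
        |ψ s l - 1| ≤ ε ^ ((1 : ℝ) / 5) ∧
        ∀ x : Fin d → ℤ, x ≠ l →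
          |ψ s x| ≤ ε ^ ((1 : ℝ) / 8 * ((∑ k, |x k - l k| : ℤ) : ℝ))) →
      ∀ x : Fin d → ℤ, ∃! s : Fin d → ℤ, ∀ y, |ψ s y| ≤ |ψ s x| := by
  classical
  refine ⟨((1:ℝ)/4) ^ (8*(d+5)), by positivity, ?_⟩
  intro ε ψ hε hε₀ _horth hPar hcen hloc
  have hε1 : ε ≤ 1 := by
    calc ε ≤ ((1:ℝ)/4) ^ (8*(d+5)) := hε₀
      _ ≤ 1 := pow_le_one₀ (by norm_num) (by norm_num)
  -- ε^{1/5} ≤ 1/4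
  have h15 : ε ^ ((1:ℝ)/5) ≤ 1/4 := by
    have h1 : ε ≤ ((1:ℝ)/4) ^ (5:ℕ) := by
      calc ε ≤ ((1:ℝ)/4) ^ (8*(d+5)) := hε₀
        _ ≤ ((1:ℝ)/4) ^ (5:ℕ) :=
          pow_le_pow_of_le_one (by norm_num) (by norm_num) (by omega)
    calc ε ^ ((1:ℝ)/5) ≤ (((1:ℝ)/4) ^ (5:ℕ)) ^ ((1:ℝ)/5) :=
          Real.rpow_le_rpow hε.le h1 (by norm_num)
      _ = 1/4 := aux_rpow_inv _ (by norm_num) 5 (by norm_num)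
  -- the key decay parameter q = ε^{1/8}
  set q : ℝ := ε ^ ((1:ℝ)/8) with hqdef
  have hq0 : 0 ≤ q := Real.rpow_nonneg hε.le _
  have hqsmall : q ≤ ((1:ℝ)/4) ^ (d+5) := by
    have h1 : ε ≤ (((1:ℝ)/4) ^ (d+5)) ^ (8:ℕ) := by
      rw [← pow_mul]
      calc ε ≤ ((1:ℝ)/4) ^ (8*(d+5)) := hε₀
        _ = ((1:ℝ)/4) ^ ((d+5)*8) := by ring_nf
    calc q ≤ ((((1:ℝ)/4) ^ (d+5)) ^ (8:ℕ)) ^ ((1:ℝ)/8) :=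
          Real.rpow_le_rpow hε.le h1 (by norm_num)
      _ = ((1:ℝ)/4) ^ (d+5) := aux_rpow_inv _ (by positivity) 8 (by norm_num)
  have hq14 : q ≤ 1/4 := by
    calc q ≤ ((1:ℝ)/4) ^ (d+5) := hqsmall
      _ ≤ ((1:ℝ)/4) ^ (1:ℕ) := pow_le_pow_of_le_one (by norm_num) (by norm_num) (by omega)
      _ = 1/4 := by norm_num
  -- summability of Parseval sums
  have hsum : ∀ x : Fin d → ℤ, Summable (fun s => ψ s x ^ 2) := by
    intro x
    by_contra h
    have := hPar x
    rw [tsum_eq_zero_of_not_summable h] at this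
    norm_num at this
  -- value at a center is at least 3/4
  have hcval : ∀ s l : Fin d → ℤ, (∀ y, |ψ s y| ≤ |ψ s l|) → (3:ℝ)/4 ≤ ψ s l := by
    intro s l hc
    have h1 := (hloc s l hc).1
    have h2 : |ψ s l - 1| ≤ 1/4 := h1.trans h15
    have := abs_le.mp h2
    linarith [this.1]
  -- uniqueness of the peaking eigenfunction
  have huniq : ∀ (x s s' : Fin d → ℤ), (∀ y, |ψ s y| ≤ |ψ s x|) →
      (∀ y, |ψ s' y| ≤ |ψ s' x|) → s = s' := by
    intro x s s' hs hs'
    by_contra hne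
    have hps : (3:ℝ)/4 ≤ ψ s x := hcval s x hs
    have hps' : (3:ℝ)/4 ≤ ψ s' x := hcval s' x hs'
    have hle : ∑ t ∈ ({s, s'} : Finset (Fin d → ℤ)), ψ t x ^ 2 ≤
        ∑' t : Fin d → ℤ, ψ t x ^ 2 := by
      refine Summable.sum_le_tsum _ (fun t _ => by positivity) (hsum x)
    rw [Finset.sum_pair hne, hPar x] at hle
    nlinarith
  intro x
  -- existence
  have hex : ∃ s : Fin d → ℤ, ∀ y, |ψ s y| ≤ |ψ s x| := by
    by_contra hno
    push_neg at hno
    choose l hlc using hcen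
    have hlnex : ∀ s, x ≠ l s := by
      intro s hEq
      obtain ⟨y, hy⟩ := hno s
      have h2 := hlc s y
      rw [← hEq] at h2
      linarith
    -- injectivity of centers
    have hlinj : ∀ s s', l s = l s' → s = s' := by
      intro s s' hss
      exact huniq (l s) s s' (hlc s) (by rw [hss]; exact hlc s')
    -- pointwise bound
    have hbound : ∀ s, ψ s x ^ 2 ≤ q * q ^ (∑ k, (x k - l s k).natAbs) := by
      intro s
      set M : ℕ := ∑ k, (x k - l s k).natAbs with hM
      have habs := (hloc s (l s) (hlc s)).2 x (hlnex s)
      have hcastZ : (∑ k, |x k - l s k| : ℤ) = (M : ℤ) := by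
        rw [hM]
        push_cast
        rfl
      have hcast : ((∑ k, |x k - l s k| : ℤ) : ℝ) = (M : ℝ) := by
        exact_mod_cast congrArg (Int.cast : ℤ → ℝ) hcastZ
      rw [hcast] at habs
      have hqM : ε ^ ((1:ℝ)/8 * (M:ℝ)) = q ^ M := by
        rw [Real.rpow_mul hε.le, hqdef, Real.rpow_natCast]
      rw [hqM] at habs
      have hM1 : 1 ≤ M := by
        have hne := hlnex s
        obtain ⟨k, hk⟩ := Function.ne_iff.mp hne
        have h1 : 1 ≤ (x k - l s k).natAbs := by omega
        calc 1 ≤ (x k - l s k).natAbs := h1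
          _ ≤ M := Finset.single_le_sum (f := fun k => (x k - l s k).natAbs)
              (fun _ _ => Nat.zero_le _) (Finset.mem_univ k)
      have hq1 : q ≤ 1 := hq14.trans (by norm_num)
      have hqMle : q ^ M ≤ q := by
        calc q ^ M ≤ q ^ 1 := pow_le_pow_of_le_one hq0 hq1 hM1
          _ = q := pow_one q
      have h0M : 0 ≤ q ^ M := by positivity
      calc ψ s x ^ 2 = |ψ s x| ^ 2 := (sq_abs _).symm
        _ ≤ (q ^ M) ^ 2 := by
            exact pow_le_pow_left₀ (abs_nonneg _) habs 2
        _ = q ^ M * q ^ M := sq (q ^ M)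
        _ ≤ q * q ^ M := mul_le_mul_of_nonneg_right hqMle h0M
    -- finite sums are uniformly small
    have hfin : ∀ F : Finset (Fin d → ℤ), ∑ s ∈ F, ψ s x ^ 2 ≤ q * 3 ^ d := by
      intro F
      have step1 : ∑ s ∈ F, ψ s x ^ 2 ≤
          q * ∑ s ∈ F, q ^ (∑ k, (x k - l s k).natAbs) := by
        rw [Finset.mul_sum]
        exact Finset.sum_le_sum (fun s _ => hbound s)
      have step2 : ∑ s ∈ F, q ^ (∑ k, (x k - l s k).natAbs)
          = ∑ y ∈ F.image l, q ^ (∑ k, (x k - y k).natAbs) := by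
        rw [Finset.sum_image (fun a _ b _ h => hlinj a b h)]
      set G : Finset (Fin d → ℤ) := F.image l with hG
      have step3 : ∑ y ∈ G, q ^ (∑ k, (x k - y k).natAbs) ≤ 3 ^ d := by
        set J : Fin d → Finset ℤ := fun k => G.image (fun y => y k) with hJ
        have hGsub : G ⊆ Fintype.piFinset J := by
          intro y hy
          rw [Fintype.mem_piFinset]
          intro k
          exact Finset.mem_image_of_mem _ hy
        calc ∑ y ∈ G, q ^ (∑ k, (x k - y k).natAbs)
            ≤ ∑ y ∈ Fintype.piFinset J, q ^ (∑ k, (x k - y k).natAbs) := by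
              refine Finset.sum_le_sum_of_subset_of_nonneg hGsub ?_
              intro i _ _; positivity
          _ = ∑ y ∈ Fintype.piFinset J, ∏ k, q ^ ((x k - y k).natAbs) := by
              refine Finset.sum_congr rfl ?_
              intro y _
              rw [Finset.prod_pow_eq_pow_sum]
          _ = ∏ k, ∑ j ∈ J k, q ^ ((x k - j).natAbs) :=
              (Finset.prod_univ_sum J (fun k j => q ^ ((x k - j).natAbs))).symm
          _ ≤ ∏ _k : Fin d, (3:ℝ) := by
              refine Finset.prod_le_prod ?_ ?_
              · intro k _
                refine Finset.sum_nonneg (fun j _ => by positivity)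
              · intro k _
                exact aux_sum_int_le q hq0 hq14 (x k) (J k)
          _ = 3 ^ d := by
              rw [Finset.prod_const]
              simp
      calc ∑ s ∈ F, ψ s x ^ 2
          ≤ q * ∑ s ∈ F, q ^ (∑ k, (x k - l s k).natAbs) := step1
        _ = q * ∑ y ∈ G, q ^ (∑ k, (x k - y k).natAbs) := by rw [step2]
        _ ≤ q * 3 ^ d := mul_le_mul_of_nonneg_left step3 hq0
    have htsum : (1:ℝ) ≤ q * 3 ^ d := by
      rw [← hPar x]
      exact Summable.tsum_le_of_sum_le (hsum x) hfin
    have hsmall : q * 3 ^ d < 1 := by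
      have h34 : ((3:ℝ)/4) ^ d ≤ 1 := pow_le_one₀ (by norm_num) (by norm_num)
      calc q * 3 ^ d ≤ ((1:ℝ)/4) ^ (d+5) * 3 ^ d :=
            mul_le_mul_of_nonneg_right hqsmall (by positivity)
        _ = ((3:ℝ)/4) ^ d * (1/4) ^ 5 := by
            rw [pow_add]
            rw [div_pow, div_pow, div_pow]
            ring
        _ ≤ 1 * (1/4) ^ 5 := by
            refine mul_le_mul_of_nonneg_right h34 (by positivity)
        _ < 1 := by norm_num
    linarith
  obtain ⟨s, hs⟩ := hex
  exact ⟨s, hs, fun s' hs' => huniq x s' s hs' hs⟩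
end
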